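/- arXiv:1807.07781 — 7 statements merged into one kernel-verified Lean document; each statement's English description precedes it below -/
import Mathlib

section
/- Let I ⊆ ℝ be an open interval, and let P, Q : I → ℝ be differentiable functions with P(x) ≠ 0 for all x ∈ I. Suppose y : ℝ → ℝ is twice differentiable on I with y''(x) + P(x)y'(x) + Q(x)y(x) = 0 on I, h : ℝ → ℝ is twice differentiable on I with P(x)h'(x) + Q(x)h(x) = 0 on I, and f : ℝ → ℝ is differentiable on I with f'(x) = P(x)f(x) on I. Then for every x ∈ I the function x ↦ f(x)(y(x)h'(x) − h(x)y'(x)) has derivative at x equal to f(x)·(Q(x)² + Q(x)P'(x) − P(x)Q'(x))/P(x)² · h(x)y(x). (Equivalently, ∫ f(x)h(x)[(Q²(x)+W(Q,P)(x))/P²(x)]y(x)dx = −f(x)h(x)[(Q(x)/P(x))y(x) + y'(x)] + c, where W(Q,P) = QP' − PQ'.) -/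
/-- Lagrangian-method identity with auxiliary function `h` satisfying `P h' + Q h = 0`
(deleting the second-derivative term): if `P`, `Q` are differentiable with `P ≠ 0` on `I`,
`y'' + P y' + Q y = 0`, and `f' = P f` on the open interval `I`, then
`x ↦ f x * (y x * h' x - h x * y' x)` has derivative
`f x * ((Q x ^ 2 + Q x * P' x - P x * Q' x) / P x ^ 2) * h x * y x` at every point of `I`. -/
theorem lagrangian_identity_h_no_second_derivative
    (I : Set ℝ) (hI : IsOpen I) (hIconn : I.OrdConnected)
    (P P' Q Q' : ℝ → ℝ) (y y' y'' h h' h'' f : ℝ → ℝ)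
    (hP : ∀ x ∈ I, HasDerivAt P (P' x) x)
    (hQ : ∀ x ∈ I, HasDerivAt Q (Q' x) x)
    (hPne : ∀ x ∈ I, P x ≠ 0)
    (hy : ∀ x ∈ I, HasDerivAt y (y' x) x)
    (hy' : ∀ x ∈ I, HasDerivAt y' (y'' x) x)
    (hodey : ∀ x ∈ I, y'' x + P x * y' x + Q x * y x = 0)
    (hh : ∀ x ∈ I, HasDerivAt h (h' x) x)
    (hh' : ∀ x ∈ I, HasDerivAt h' (h'' x) x)
    (hodeh : ∀ x ∈ I, P x * h' x + Q x * h x = 0)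
    (hf : ∀ x ∈ I, HasDerivAt f (P x * f x) x) :
    ∀ x ∈ I, HasDerivAt (fun t => f t * (y t * h' t - h t * y' t))
      (f x * ((Q x ^ 2 + Q x * P' x - P x * Q' x) / P x ^ 2) * h x * y x) x := by
  intro x hx
  have hPx := hPne x hx
  have e2 := hodeh x hx
  have hmem : I ∈ nhds x := hI.mem_nhds hx
  -- derivative of P h' + Q h, which is identically 0 on I
  have hder : HasDerivAt (fun t => P t * h' t + Q t * h t)
      (P' x * h' x + P x * h'' x + (Q' x * h x + Q x * h' x)) x :=
    ((hP x hx).mul (hh' x hx)).add ((hQ x hx).mul (hh x hx))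
  have hzero : HasDerivAt (fun t => P t * h' t + Q t * h t) 0 x := by
    have : (fun t => P t * h' t + Q t * h t) =ᶠ[nhds x] fun _ : ℝ => (0:ℝ) := by
      filter_upwards [hmem] with t ht using hodeh t ht
    exact (hasDerivAt_const x (0:ℝ)).congr_of_eventuallyEq this
  have e3 : P' x * h' x + P x * h'' x + (Q' x * h x + Q x * h' x) = 0 :=
    hder.unique hzero
  have h'eq : h' x = -(Q x * h x) / P x := by
    field_simp
    linarith
  have h''eq : h'' x = (Q x ^ 2 + Q x * P' x - P x * Q' x) / P x ^ 2 * h x := by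
    rw [h'eq] at e3
    field_simp at e3 ⊢
    linarith
  have y''eq : y'' x = -(P x * y' x + Q x * y x) := by
    have := hodey x hx; linarith
  have hmain : HasDerivAt (fun t => f t * (y t * h' t - h t * y' t))
      (P x * f x * (y x * h' x - h x * y' x) +
        f x * (y' x * h' x + y x * h'' x - (h' x * y' x + h x * y'' x))) x :=
    (hf x hx).mul (((hy x hx).mul (hh' x hx)).sub ((hh x hx).mul (hy' x hx)))
  convert hmain using 1
  rw [h'eq, h''eq, y''eq]
  field_simp
  ring
end

section
/- Fix real numbers a > 1 and α with α ≠ 0 and α ≠ 1, and consider the Heun equation with parameters (a, q; α, β, γ, δ) = (a, α(1−α); α, 1−α, 1, 0) (so ε = 1): y''(x) + (1/x + 1/(x−a))y'(x) + (α(1−α)x − α(1−α))/(x(x−1)(x−a)) y(x) = 0. Let I ⊆ ℝ be an open interval with 0, 1, a ∉ I and let y : ℝ → ℝ be twice differentiable on I solving this equation on I. Then for every x ∈ I the function x ↦ x(a−x)y'(x)/(α(1−α)) has derivative at x equal to y(x). (Equivalently, ∫ y(x)dx = (x(a−x)/(α(1−α))) y'(x) + c; applied to the local Heun function this gives ∫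 H_ℓ(a,α−α²;α,1−α,1,0;x)dx = (x(a−x)/(α(1−α))) H'_ℓ(a,α−α²;α,1−α,1,0;x) + c.) -/
/-- Integral of a solution of the Heun equation with parameters
`(a, α(1-α); α, 1-α, 1, 0)` (so `ε = 1`): for `a > 1`, `α ≠ 0`, `α ≠ 1` and any solution
`y` of `y'' + (1/x + 1/(x-a)) y' + (α(1-α)x - α(1-α))/(x(x-1)(x-a)) y = 0` on an open
interval `I` avoiding `0`, `1`, `a`, the function `x ↦ x(a-x)y'(x)/(α(1-α))` has
derivative `y x` at every point of `I` (i.e. `∫ y dx = x(a-x)y'/(α(1-α)) + c`). -/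
theorem heun_integral_special_parameters
    (a α : ℝ) (ha : 1 < a) (hα0 : α ≠ 0) (hα1 : α ≠ 1)
    (I : Set ℝ) (hI : IsOpen I) (hIconn : I.OrdConnected)
    (h0 : (0 : ℝ) ∉ I) (h1 : (1 : ℝ) ∉ I) (hai : a ∉ I)
    (y y' y'' : ℝ → ℝ)
    (hy : ∀ x ∈ I, HasDerivAt y (y' x) x)
    (hy' : ∀ x ∈ I, HasDerivAt y' (y'' x) x)
    (hode : ∀ x ∈ I, y'' x + (1 / x + 1 / (x - a)) * y' x
      + ((α * (1 - α) * x - α * (1 - α)) / (x * (x - 1) * (x - a))) * y x = 0) :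
    ∀ x ∈ I, HasDerivAt (fun t => t * (a - t) * y' t / (α * (1 - α))) (y x) x := by
  intro x hx
  have hx0 : x ≠ 0 := by rintro rfl; exact h0 hx
  have hx1 : x ≠ 1 := by rintro rfl; exact h1 hx
  have hxa : x ≠ a := by rintro rfl; exact hai hx
  have hα : α * (1 - α) ≠ 0 :=
    mul_ne_zero hα0 (sub_ne_zero.mpr fun h => hα1 h.symm)
  have H : HasDerivAt (fun t => t * (a - t) * y' t)
      ((1 * (a - x) + x * (0 - 1)) * y' x + x * (a - x) * y'' x) x :=
    (((hasDerivAt_id x).mul ((hasDerivAt_const x a).sub (hasDerivAt_id x))).mul (hy' x hx))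
  have := H.div_const (α * (1 - α))
  convert this using 1
  · rfl
  · rfl
  have hode' := hode x hx
  have hxs1 : x - 1 ≠ 0 := sub_ne_zero.mpr hx1
  have hxsa : x - a ≠ 0 := sub_ne_zero.mpr hxa
  have hprod : x * (x - 1) * (x - a) ≠ 0 := mul_ne_zero (mul_ne_zero hx0 hxs1) hxsa
  field_simp at hode' ⊢
  have hG : (y x * (α * (1 - α)) - ((a - x + -x) * y' x + x * (a - x) * y'' x))
      * (x * (x - 1) * (x - a)) = 0 := by linear_combination hode' * (x * (x - 1) * (x - a))
  have := (mul_eq_zero.mp hG).resolve_right hprod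
  linarith [this]
end

section
/- Fix real numbers a > 1, q, α, β, γ with γ < 1 and 2−γ not a nonpositive integer, set δ = 0, τ = 1−γ and ε = α+β+τ. Let I ⊆ (0,1) be an open interval and let y : ℝ → ℝ be twice differentiable on I solving the Heun equation y'' + Py' + Qy = 0 (with these parameters) on I. Then for every x ∈ I the function x ↦ (a−x)^ε · ( τ[₂F₁(ε,τ;1+τ;x/a) + (εx/(a(1+τ)))·₂F₁(ε+1,1+τ;2+τ;x/a)]·y(x) − x·₂F₁(ε,τ;1+τ;x/a)·y'(x) ) has derivative at x equal to ((a−x)^(ε−1)(αβx−q)/(1−x))·₂F₁(ε,τ;1+τ;x/a)·y(x). (This is the Lagrangian identity with auxiliary function h(x) = x^(1−γ)·₂F₁(ε,1−γ;2−γ;x/a), a solution of h'' + Ph' = 0.) -/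
open Real

set_option maxHeartbeats 1000000

namespace HeunAux

noncomputable def pc (A : ℝ) (n : ℕ) : ℝ := (ascPochhammer ℝ n).eval A

noncomputable def hgc (A b c : ℝ) (n : ℕ) : ℝ :=
  ((n.factorial : ℝ))⁻¹ * pc A n * pc b n * (pc c n)⁻¹


lemma hg_eq_tsum (A b c x : ℝ) : ₂F₁ A b c x = ∑' n, hgc A b c n * x ^ n := by
  rw [ordinaryHypergeometric_eq_tsum]
  exact tsum_congr fun n => by simp [hgc, pc, smul_eq_mul]

lemma pc_zero (A : ℝ) : pc A 0 = 1 := by simp [pc]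

lemma pc_succ (A : ℝ) (n : ℕ) : pc A (n+1) = A * pc (A+1) n := by
  unfold pc
  rw [ascPochhammer_succ_left]
  simp [Polynomial.eval_comp]

lemma pc_succ_right (A : ℝ) (n : ℕ) : pc A (n+1) = pc A n * (A + n) :=
  ascPochhammer_succ_eval n A

lemma pc_ne_zero {A : ℝ} (hA : 0 < A) (n : ℕ) : pc A n ≠ 0 := by
  rw [pc, Ne, ascPochhammer_eval_eq_zero_iff]
  rintro ⟨k, -, hk⟩
  have : (0:ℝ) ≤ (k:ℝ) := Nat.cast_nonneg k
  rw [hk] at this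
  linarith

lemma hgc_zero (A b c : ℝ) : hgc A b c 0 = 1 := by simp [hgc, pc_zero]

lemma hgc_succ (A b c : ℝ) (n : ℕ) :
    ((n:ℝ)+1) * hgc A b c (n+1) = (A * b / c) * hgc (A+1) (b+1) (c+1) n := by
  unfold hgc
  rw [pc_succ, pc_succ, pc_succ, Nat.factorial_succ]
  push_cast
  rw [mul_inv, mul_inv, div_eq_mul_inv]
  have hn : ((n:ℝ)+1) ≠ 0 := by positivity
  linear_combination ((n.factorial:ℝ))⁻¹ * A * pc (A+1) n * b * pc (b+1) n * c⁻¹ *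
    (pc (c+1) n)⁻¹ * (mul_inv_cancel₀ hn)


lemma one_le_radius (A b c : ℝ) (hb : ∀ k : ℕ, (k:ℝ) ≠ -b) (hc : ∀ k : ℕ, (k:ℝ) ≠ -c) :
    1 ≤ (ordinaryHypergeometricSeries ℝ A b c).radius := by
  by_cases hA : ∃ k : ℕ, (k:ℝ) = -A
  · obtain ⟨k, hk⟩ := hA
    have hA' : A = -(k:ℝ) := by linarith
    rw [hA', ordinaryHypergeometric_radius_top_of_neg_nat₁]
    exact le_top
  · push_neg at hA
    rw [ordinaryHypergeometricSeries_radius_eq_one ℝ A b c fun kn => ⟨hA kn, hb kn, hc kn⟩]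

lemma norm_series (A b c : ℝ) (n : ℕ) :
    ‖ordinaryHypergeometricSeries ℝ A b c n‖ = |hgc A b c n| := by
  rw [ordinaryHypergeometricSeries, FormalMultilinearSeries.ofScalars_norm]
  simp only [hgc, pc, Real.norm_eq_abs, abs_mul, abs_inv, Nat.abs_cast]

lemma summable_abs_hgc (A b c : ℝ) (hb : ∀ k : ℕ, (k:ℝ) ≠ -b) (hc : ∀ k : ℕ, (k:ℝ) ≠ -c)
    {z : ℝ} (hz : |z| < 1) :
    Summable fun n => |hgc A b c n| * |z| ^ n := by
  have h1 := one_le_radius A b c hb hc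
  have hz' : (‖z‖₊ : ENNReal) < (ordinaryHypergeometricSeries ℝ A b c).radius := by
    refine lt_of_lt_of_le ?_ h1
    rw [show (1 : ENNReal) = ((1 : NNReal) : ENNReal) from rfl, ENNReal.coe_lt_coe]
    rw [← NNReal.coe_lt_coe]
    simpa [Real.norm_eq_abs] using hz
  have := (ordinaryHypergeometricSeries ℝ A b c).summable_norm_mul_pow hz'
  convert this using 2 with n
  rw [norm_series]
  simp [Real.norm_eq_abs]

lemma summable_hgc (A b c : ℝ) (hb : ∀ k : ℕ, (k:ℝ) ≠ -b) (hc : ∀ k : ℕ, (k:ℝ) ≠ -c)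
    {z : ℝ} (hz : |z| < 1) :
    Summable fun n => hgc A b c n * z ^ n := by
  refine Summable.of_norm_bounded (summable_abs_hgc A b c hb hc hz) fun n => le_of_eq ?_
  simp [abs_mul, abs_pow]


lemma abs_hgc_succ (A b c : ℝ) (n : ℕ) :
    ((n:ℝ)+1) * |hgc A b c (n+1)| = |A * b / c| * |hgc (A+1) (b+1) (c+1) n| := by
  have h := hgc_succ A b c n
  have h2 := congrArg abs h
  rwa [abs_mul, abs_mul, abs_of_nonneg (by positivity : (0:ℝ) ≤ (n:ℝ)+1)] at h2

lemma summable_nat_abs_hgc (A b c : ℝ)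
    (hb' : ∀ k : ℕ, (k:ℝ) ≠ -(b+1)) (hc' : ∀ k : ℕ, (k:ℝ) ≠ -(c+1))
    {z : ℝ} (hz : |z| < 1) :
    Summable fun n : ℕ => (n:ℝ) * |hgc A b c n| * |z| ^ n := by
  apply (summable_nat_add_iff 1).mp
  have : (fun n : ℕ => ((n+1 : ℕ):ℝ) * |hgc A b c (n+1)| * |z| ^ (n+1))
      = fun n : ℕ => (|A * b / c| * |z|) * (|hgc (A+1) (b+1) (c+1) n| * |z| ^ n) := by
    funext n
    push_cast
    rw [abs_hgc_succ]
    ring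
  rw [this]
  exact (summable_abs_hgc (A+1) (b+1) (c+1) hb' hc' hz).mul_left _

lemma summable_nat_hgc (A b c : ℝ)
    (hb' : ∀ k : ℕ, (k:ℝ) ≠ -(b+1)) (hc' : ∀ k : ℕ, (k:ℝ) ≠ -(c+1))
    {z : ℝ} (hz : |z| < 1) :
    Summable fun n : ℕ => (n:ℝ) * hgc A b c n * z ^ n := by
  refine Summable.of_norm_bounded (summable_nat_abs_hgc A b c hb' hc' hz) fun n => le_of_eq ?_
  simp [abs_mul, abs_pow, abs_of_nonneg (Nat.cast_nonneg n : (0:ℝ) ≤ (n:ℝ))]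


lemma hasDerivAt_hgsum (A b c : ℝ) (hb : ∀ k : ℕ, (k:ℝ) ≠ -b) (hc : ∀ k : ℕ, (k:ℝ) ≠ -c)
    (hb' : ∀ k : ℕ, (k:ℝ) ≠ -(b+1)) (hc' : ∀ k : ℕ, (k:ℝ) ≠ -(c+1))
    {a x : ℝ} (ha : 1 < a) (hx : x ∈ Set.Ioo (-1:ℝ) 1) :
    HasDerivAt (fun t => ∑' n, hgc A b c n * (t/a)^n)
      ((A*b/(c*a)) * ∑' n, hgc (A+1) (b+1) (c+1) n * (x/a)^n) x := by
  have ha0 : (0:ℝ) < a := by linarith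
  have hra : |1/a| < 1 := by
    rw [abs_of_pos (by positivity), div_lt_one ha0]; linarith
  set u : ℕ → ℝ := fun n : ℕ => (n:ℝ) * |hgc A b c n| * |1/a| ^ n with hu_def
  have hu : Summable u := summable_nat_abs_hgc A b c hb' hc' hra
  set g : ℕ → ℝ → ℝ := fun n t => hgc A b c n * (t/a)^n with hg_def
  set g' : ℕ → ℝ → ℝ := fun n t => hgc A b c n * ((n:ℝ) * (t/a)^(n-1) * (1/a))
    with hg'_def
  have hderiv : ∀ (n : ℕ), ∀ t ∈ Set.Ioo (-1:ℝ) 1, HasDerivAt (g n) (g' n t) t := by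
    intro n t _
    have h1 : HasDerivAt (fun s : ℝ => s / a) (1/a) t := (hasDerivAt_id t).div_const a
    exact ((hasDerivAt_pow n (t/a)).comp t h1).const_mul (hgc A b c n)
  have hbound : ∀ (n : ℕ), ∀ t ∈ Set.Ioo (-1:ℝ) 1, ‖g' n t‖ ≤ u n := by
    intro n t ht
    have hta : |t/a| ≤ 1/a := by
      rw [abs_div, abs_of_pos ha0]
      gcongr
      exact le_of_lt (abs_lt.mpr ⟨ht.1, ht.2⟩)
    have hpa : (0:ℝ) < 1/a := by positivity
    match n with
    | 0 =>
      have h0 : g' 0 t = 0 := by simp [hg'_def]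
      rw [h0]; simp [hu_def]
    | (m+1) =>
      have e1 : ‖g' (m+1) t‖ = |hgc A b c (m+1)| * (((m+1:ℕ):ℝ) * |t/a|^m * (1/a)) := by
        simp only [hg'_def, Nat.add_sub_cancel]
        rw [Real.norm_eq_abs, abs_mul, abs_mul, abs_mul, abs_pow, Nat.abs_cast,
          abs_of_pos hpa]
      have e2 : u (m+1) = |hgc A b c (m+1)| * (((m+1:ℕ):ℝ) * ((1/a)^m * (1/a))) := by
        simp only [hu_def]
        rw [abs_of_pos hpa, pow_succ]
        ring
      rw [e1, e2]
      have h2 : |t/a|^m ≤ (1/a)^m := pow_le_pow_left₀ (abs_nonneg _) hta m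
      calc |hgc A b c (m+1)| * (((m+1:ℕ):ℝ) * |t/a|^m * (1/a))
          ≤ |hgc A b c (m+1)| * (((m+1:ℕ):ℝ) * (1/a)^m * (1/a)) := by gcongr
        _ = |hgc A b c (m+1)| * (((m+1:ℕ):ℝ) * ((1/a)^m * (1/a))) := by ring
  have hxa : |x/a| < 1 := by
    rw [abs_div, abs_of_pos ha0, div_lt_one ha0]
    have := abs_lt.mpr ⟨hx.1, hx.2⟩; linarith
  have hsum_x : Summable fun n => g n x := summable_hgc A b c hb hc hxa
  have key := hasDerivAt_tsum_of_isPreconnected hu isOpen_Ioo isPreconnected_Ioo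
    hderiv hbound hx hsum_x hx
  have hsum' : Summable fun n => g' n x :=
    Summable.of_norm_bounded hu (fun n => hbound n x hx)
  have hval : ∑' n, g' n x = (A*b/(c*a)) * ∑' n, hgc (A+1) (b+1) (c+1) n * (x/a)^n := by
    rw [Summable.tsum_eq_zero_add hsum']
    have h0 : g' 0 x = 0 := by simp [hg'_def]
    rw [h0, zero_add, ← tsum_mul_left]
    refine tsum_congr fun n => ?_
    simp only [hg'_def, Nat.add_sub_cancel]
    push_cast
    linear_combination ((x/a)^n * (1/a)) * hgc_succ A b c n
  rw [← hval]
  exact key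


lemma pc_one (n : ℕ) : pc 1 n = (n.factorial : ℝ) := by
  simpa [pc] using ascPochhammer_eval_one ℝ n

/-- `(τ+n) * hgc ε τ (1+τ) n = τ * hgc ε 1 1 n` -/
lemma R2 (e τ : ℝ) (hτ : 0 < τ) (n : ℕ) :
    (τ + n) * hgc e τ (1+τ) n = τ * hgc e 1 1 n := by
  have h1 : pc τ n * (τ + n) = τ * pc (1+τ) n := by
    rw [← pc_succ_right, pc_succ, add_comm τ 1]
  have h2 : pc (1+τ) n ≠ 0 := pc_ne_zero (by linarith) n
  have h3 : pc 1 n ≠ 0 := pc_ne_zero one_pos n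
  unfold hgc
  have e1 : pc 1 n * (pc 1 n)⁻¹ = 1 := mul_inv_cancel₀ h3
  have e2 : pc (1+τ) n * (pc (1+τ) n)⁻¹ = 1 := mul_inv_cancel₀ h2
  linear_combination ((n.factorial:ℝ)⁻¹ * pc e n * (pc (1+τ) n)⁻¹) * h1
    + (τ * (n.factorial:ℝ)⁻¹ * pc e n) * e2 - (τ * (n.factorial:ℝ)⁻¹ * pc e n) * e1

/-- `hgc (ε+1) 2 2 (n+1) - hgc (ε+1) 2 2 n = hgc ε 1 1 (n+1)` -/
lemma I2coef (e : ℝ) (n : ℕ) :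
    hgc (e+1) 2 2 (n+1) - hgc (e+1) 2 2 n = hgc e 1 1 (n+1) := by
  have h2 : pc 2 n ≠ 0 := pc_ne_zero two_pos n
  have h2' : pc 2 (n+1) ≠ 0 := pc_ne_zero two_pos (n+1)
  have h1 : pc 1 (n+1) ≠ 0 := pc_ne_zero one_pos (n+1)
  have key : pc (e+1) (n+1) - ((n:ℝ)+1) * pc (e+1) n = pc e (n+1) := by
    rw [pc_succ_right, pc_succ]
    ring
  have hfac : ((n+1).factorial : ℝ) = ((n:ℝ)+1) * (n.factorial : ℝ) := by
    rw [Nat.factorial_succ]; push_cast; ring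
  unfold hgc
  rw [hfac]
  have hn : ((n:ℝ)+1) ≠ 0 := by positivity
  have hnf : (n.factorial : ℝ) ≠ 0 := Nat.cast_ne_zero.mpr n.factorial_ne_zero
  have eQ : pc 2 (n+1) * (pc 2 (n+1))⁻¹ = 1 := mul_inv_cancel₀ h2'
  have eR : pc 2 n * (pc 2 n)⁻¹ = 1 := mul_inv_cancel₀ h2
  have eS : pc 1 (n+1) * (pc 1 (n+1))⁻¹ = 1 := mul_inv_cancel₀ h1
  have eN : ((n:ℝ)+1) * ((n:ℝ)+1)⁻¹ = 1 := mul_inv_cancel₀ hn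
  have eM : (((n:ℝ)+1) * (n.factorial:ℝ))⁻¹ = ((n:ℝ)+1)⁻¹ * (n.factorial:ℝ)⁻¹ := mul_inv _ _
  linear_combination (((n:ℝ)+1) * (n.factorial:ℝ))⁻¹ * key
    + ((((n:ℝ)+1) * (n.factorial:ℝ))⁻¹ * pc (e+1) (n+1)) * eQ
    - ((n.factorial:ℝ)⁻¹ * pc (e+1) n) * eR
    - ((((n:ℝ)+1) * (n.factorial:ℝ))⁻¹ * pc e (n+1)) * eS
    + ((n.factorial:ℝ)⁻¹ * pc (e+1) n) * eN + (((n:ℝ)+1) * pc (e+1) n) * eM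


lemma ne_neg_of_pos {b : ℝ} (hb : 0 < b) : ∀ k : ℕ, (k:ℝ) ≠ -b := by
  intro k h
  have : (0:ℝ) ≤ (k:ℝ) := Nat.cast_nonneg k
  rw [h] at this; linarith

lemma abs_div_lt_one {a t : ℝ} (ha : 1 < a) (ht : t ∈ Set.Ioo (-1:ℝ) 1) : |t/a| < 1 := by
  have ha0 : (0:ℝ) < a := by linarith
  rw [abs_div, abs_of_pos ha0, div_lt_one ha0]
  have := abs_lt.mpr ⟨ht.1, ht.2⟩
  linarith

/-- Identity I1: the bracket equals `τ ∑ hgc ε 1 1 n (t/a)^n`. -/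
lemma I1 (e τ a t : ℝ) (hτ : 0 < τ) (ha : 1 < a) (ht : t ∈ Set.Ioo (-1:ℝ) 1) :
    τ * (₂F₁ e τ (1+τ) (t/a) + e*t/(a*(1+τ)) * ₂F₁ (e+1) (1+τ) (2+τ) (t/a))
      = τ * ∑' n, hgc e 1 1 n * (t/a)^n := by
  have ha0 : (0:ℝ) < a := by linarith
  set z := t/a with hz_def
  have hz : |z| < 1 := abs_div_lt_one ha ht
  have sA : Summable fun n => hgc e τ (1+τ) n * z ^ n :=
    summable_hgc _ _ _ (ne_neg_of_pos hτ) (ne_neg_of_pos (by linarith)) hz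
  have sB : Summable fun n => hgc (e+1) (1+τ) (2+τ) n * z ^ n :=
    summable_hgc _ _ _ (ne_neg_of_pos (by linarith)) (ne_neg_of_pos (by linarith)) hz
  have sN : Summable fun n : ℕ => (n:ℝ) * hgc e τ (1+τ) n * z ^ n :=
    summable_nat_hgc _ _ _ (ne_neg_of_pos (by linarith)) (ne_neg_of_pos (by linarith)) hz
  rw [hg_eq_tsum, hg_eq_tsum]
  have hsc : τ * (e*t/(a*(1+τ))) = (e*τ/(1+τ))*z := by
    rw [hz_def]; field_simp
  have step1 : ∑' n : ℕ, (n:ℝ) * hgc e τ (1+τ) n * z^n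
      = ∑' n : ℕ, ((n:ℝ)+1) * hgc e τ (1+τ) (n+1) * z^(n+1) := by
    rw [Summable.tsum_eq_zero_add sN]
    push_cast
    simp
  calc τ * ((∑' n, hgc e τ (1+τ) n * z ^ n) + e*t/(a*(1+τ)) * ∑' n, hgc (e+1) (1+τ) (2+τ) n * z^n)
      = τ * (∑' n, hgc e τ (1+τ) n * z ^ n)
        + ((e*τ/(1+τ))*z) * ∑' n, hgc (e+1) (1+τ) (2+τ) n * z^n := by
        rw [mul_add, ← mul_assoc, hsc]
    _ = τ * (∑' n, hgc e τ (1+τ) n * z ^ n)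
        + ∑' n : ℕ, ((e*τ/(1+τ))*z) * (hgc (e+1) (1+τ) (2+τ) n * z^n) := by
        rw [tsum_mul_left]
    _ = τ * (∑' n, hgc e τ (1+τ) n * z ^ n)
        + ∑' n : ℕ, ((n:ℝ)+1) * hgc e τ (1+τ) (n+1) * z^(n+1) := by
        congr 1
        refine tsum_congr fun n => ?_
        have h := hgc_succ e τ (1+τ) n
        rw [show τ+1 = 1+τ from add_comm τ 1, show (1+τ)+1 = 2+τ by ring] at h
        linear_combination (-(z^(n+1))) * h
    _ = τ * (∑' n, hgc e τ (1+τ) n * z ^ n)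
        + ∑' n : ℕ, (n:ℝ) * hgc e τ (1+τ) n * z^n := by rw [← step1]
    _ = (∑' n : ℕ, τ * (hgc e τ (1+τ) n * z ^ n))
        + ∑' n : ℕ, (n:ℝ) * hgc e τ (1+τ) n * z^n := by rw [tsum_mul_left]
    _ = ∑' n : ℕ, (τ * (hgc e τ (1+τ) n * z ^ n) + (n:ℝ) * hgc e τ (1+τ) n * z^n) := by
        rw [Summable.tsum_add (sA.mul_left τ) sN]
    _ = ∑' n : ℕ, τ * (hgc e 1 1 n * z ^ n) := by
        refine tsum_congr fun n => ?_
        linear_combination (z^n) * R2 e τ hτ n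
    _ = τ * ∑' n, hgc e 1 1 n * z ^ n := by rw [tsum_mul_left]

/-- Identity core2: `(a-x) S' = a S`. -/
lemma core2 (e a x : ℝ) (ha : 1 < a) (hx : x ∈ Set.Ioo (-1:ℝ) 1) :
    (a - x) * ∑' n, hgc (e+1) 2 2 n * (x/a)^n = a * ∑' n, hgc e 1 1 n * (x/a)^n := by
  have ha0 : (0:ℝ) < a := by linarith
  set z := x/a with hz_def
  have hz : |z| < 1 := abs_div_lt_one ha hx
  have sB : Summable fun n => hgc (e+1) 2 2 n * z ^ n :=
    summable_hgc _ _ _ (ne_neg_of_pos two_pos) (ne_neg_of_pos two_pos) hz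
  have s1 : Summable fun n => hgc e 1 1 n * z ^ n :=
    summable_hgc _ _ _ (ne_neg_of_pos one_pos) (ne_neg_of_pos one_pos) hz
  have sshift : Summable fun n : ℕ => hgc (e+1) 2 2 (n+1) * z ^ (n+1) :=
    (summable_nat_add_iff 1).mpr sB
  have szb : Summable fun n : ℕ => hgc (e+1) 2 2 n * z ^ (n+1) := by
    have : (fun n : ℕ => hgc (e+1) 2 2 n * z ^ (n+1))
        = fun n : ℕ => z * (hgc (e+1) 2 2 n * z ^ n) := by
      funext n; ring
    rw [this]; exact sB.mul_left z
  have hx' : x = a * z := by rw [hz_def]; field_simp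
  have T : (∑' n, hgc (e+1) 2 2 n * z^n) - z * ∑' n, hgc (e+1) 2 2 n * z^n
      = ∑' n, hgc e 1 1 n * z^n := by
    have e1 : z * ∑' n, hgc (e+1) 2 2 n * z^n = ∑' n : ℕ, hgc (e+1) 2 2 n * z^(n+1) := by
      rw [← tsum_mul_left]
      exact tsum_congr fun n => by ring
    rw [e1, Summable.tsum_eq_zero_add sB, Summable.tsum_eq_zero_add s1]
    rw [add_sub_assoc, ← Summable.tsum_sub sshift szb]
    rw [hgc_zero, hgc_zero]
    congr 1
    refine tsum_congr fun n => ?_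
    linear_combination (z^(n+1)) * I2coef e n
  calc (a - x) * ∑' n, hgc (e+1) 2 2 n * z^n
      = a * ((∑' n, hgc (e+1) 2 2 n * z^n) - z * ∑' n, hgc (e+1) 2 2 n * z^n) := by
        rw [hx']; ring
    _ = a * ∑' n, hgc e 1 1 n * z^n := by rw [T]


end HeunAux

open HeunAux


/-- Lagrangian identity for the Heun equation with `δ = 0` and auxiliary function
`h(x) = x^(1-γ) ₂F₁(ε, 1-γ; 2-γ; x/a)` (a solution of `h'' + P h' = 0`): with
`τ = 1-γ`, `ε = α+β+τ`, for any solution `y` on an open interval `I ⊆ (0,1)` (`a > 1`,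
`γ < 1`, `2-γ` not a nonpositive integer), the function
`x ↦ (a-x)^ε (τ[₂F₁(ε,τ;1+τ;x/a) + (εx/(a(1+τ)))₂F₁(ε+1,1+τ;2+τ;x/a)] y(x)
  - x ₂F₁(ε,τ;1+τ;x/a) y'(x))`
has derivative `((a-x)^(ε-1)(αβx-q)/(1-x)) ₂F₁(ε,τ;1+τ;x/a) y(x)`. -/
theorem heun_integral_hypergeometric_h_delta_zero
    (a q α β γ τ ε : ℝ) (ha : 1 < a) (hγ : γ < 1)
    (hγint : ∀ n : ℕ, 2 - γ ≠ -(n : ℝ))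
    (hτ : τ = 1 - γ) (hε : ε = α + β + τ)
    (I : Set ℝ) (hI : IsOpen I) (hIconn : I.OrdConnected)
    (hIsub : I ⊆ Set.Ioo (0 : ℝ) 1)
    (y y' y'' : ℝ → ℝ)
    (hy : ∀ x ∈ I, HasDerivAt y (y' x) x)
    (hy' : ∀ x ∈ I, HasDerivAt y' (y'' x) x)
    (hode : ∀ x ∈ I, y'' x
      + (γ / x + (0 : ℝ) / (x - 1) + ε / (x - a)) * y' x
      + ((α * β * x - q) / (x * (x - 1) * (x - a))) * y x = 0) :
    ∀ x ∈ I, HasDerivAt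
      (fun t => (a - t) ^ ε *
        (τ * (₂F₁ ε τ (1 + τ) (t / a)
            + ε * t / (a * (1 + τ)) * ₂F₁ (ε + 1) (1 + τ) (2 + τ) (t / a)) * y t
          - t * ₂F₁ ε τ (1 + τ) (t / a) * y' t))
      ((a - x) ^ (ε - 1) * (α * β * x - q) / (1 - x)
        * ₂F₁ ε τ (1 + τ) (x / a) * y x) x := by
  intro x hx
  have hτ0 : 0 < τ := by rw [hτ]; linarith
  obtain ⟨hx0, hx1⟩ := hIsub hx
  have hxIoo : x ∈ Set.Ioo (-1:ℝ) 1 := ⟨by linarith, hx1⟩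
  have hax : (0:ℝ) < a - x := by linarith
  have ha0 : (0:ℝ) < a := by linarith
  have hpow : (a-x) ^ ε = (a-x) ^ (ε-1) * (a-x) := by
    nth_rewrite 1 [show ε = (ε-1)+1 by ring]
    exact Real.rpow_add_one (ne_of_gt hax) (ε-1)
  -- derivative of t ↦ (a-t)^ε
  have hinner : HasDerivAt (fun t : ℝ => a - t) (-1) x := (hasDerivAt_id x).const_sub a
  have hRp : HasDerivAt (fun t : ℝ => (a - t) ^ ε) (ε * (a-x) ^ (ε-1) * (-1)) x :=
    (Real.hasDerivAt_rpow_const (Or.inl (ne_of_gt hax))).comp x hinner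
  -- derivative of the W series
  have hW := hasDerivAt_hgsum ε 1 1 (ne_neg_of_pos one_pos) (ne_neg_of_pos one_pos)
    (ne_neg_of_pos (by norm_num)) (ne_neg_of_pos (by norm_num)) ha hxIoo
  rw [show (1:ℝ)+1 = 2 by norm_num] at hW
  -- Φw has derivative zero
  have hΦw : HasDerivAt (fun t => (a - t) ^ ε * (τ * ∑' n, hgc ε 1 1 n * (t/a)^n)) 0 x := by
    have h := hRp.mul (hW.const_mul τ)
    refine h.congr_deriv (Eq.symm ?_)
    have hc2 := core2 ε a x ha hxIoo
    set S2 := ∑' n, hgc (ε+1) 2 2 n * (x/a)^n with hS2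
    set S1 := ∑' n, hgc ε 1 1 n * (x/a)^n with hS1
    linear_combination (-(τ * (ε*1/(1*a)) * S2)) * hpow
      + (-((a-x)^(ε-1) * τ * (ε*1/(1*a)))) * hc2
      + (-(τ * ε * (a-x)^(ε-1) * S1)) *
        (mul_inv_cancel₀ (show a ≠ 0 by positivity) : a * a⁻¹ = 1)
  -- Φ (with the hypergeometric bracket) has derivative zero
  have hΦ : HasDerivAt (fun t => (a - t) ^ ε *
      (τ * (₂F₁ ε τ (1 + τ) (t / a)
        + ε * t / (a * (1 + τ)) * ₂F₁ (ε + 1) (1 + τ) (2 + τ) (t / a)))) 0 x := by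
    refine hΦw.congr_of_eventuallyEq ?_
    refine Filter.eventuallyEq_of_mem (Ioo_mem_nhds (show (-1:ℝ) < x by linarith) hx1) ?_
    intro t ht
    simp only
    rw [I1 ε τ a t hτ0 ha ht]
  -- derivative of F
  have hFs := hasDerivAt_hgsum ε τ (1+τ) (ne_neg_of_pos hτ0) (ne_neg_of_pos (by linarith))
    (ne_neg_of_pos (by linarith)) (ne_neg_of_pos (by linarith)) ha hxIoo
  rw [show τ+1 = 1+τ from add_comm τ 1, show (1+τ)+1 = 2+τ by ring, ← hg_eq_tsum] at hFs
  have hF : HasDerivAt (fun t => ₂F₁ ε τ (1+τ) (t/a))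
      ((ε*τ/((1+τ)*a)) * ₂F₁ (ε+1) (1+τ) (2+τ) (x/a)) x :=
    hFs.congr_of_eventuallyEq (Filter.Eventually.of_forall fun t => hg_eq_tsum ε τ (1+τ) (t/a))
  -- derivative of Ψ
  have hid : HasDerivAt (fun t : ℝ => t * ₂F₁ ε τ (1+τ) (t/a))
      (1 * ₂F₁ ε τ (1+τ) (x/a) + x * ((ε*τ/((1+τ)*a)) * ₂F₁ (ε+1) (1+τ) (2+τ) (x/a))) x :=
    (hasDerivAt_id x).mul hF
  have hΨ := hRp.mul hid
  -- assemble
  have hG := (hΦ.mul (hy x hx)).sub (hΨ.mul (hy' x hx))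
  have hGfun : (fun t => (a - t) ^ ε *
        (τ * (₂F₁ ε τ (1 + τ) (t / a)
            + ε * t / (a * (1 + τ)) * ₂F₁ (ε + 1) (1 + τ) (2 + τ) (t / a)) * y t
          - t * ₂F₁ ε τ (1 + τ) (t / a) * y' t))
      = (fun t => ((a - t) ^ ε *
          (τ * (₂F₁ ε τ (1 + τ) (t / a)
            + ε * t / (a * (1 + τ)) * ₂F₁ (ε + 1) (1 + τ) (2 + τ) (t / a)))) * y t
          - ((a - t) ^ ε * (t * ₂F₁ ε τ (1 + τ) (t / a))) * y' t) := by
    funext t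
    ring
  rw [hGfun]
  refine hG.congr_deriv (Eq.symm ?_)
  simp only [Pi.mul_apply]
  have h := hode x hx
  have hode' : y'' x = -((γ / x + (0:ℝ) / (x - 1) + ε / (x - a)) * y' x)
      - ((α * β * x - q) / (x * (x - 1) * (x - a))) * y x := by linarith
  rw [hode', hpow]
  have hx0' : x ≠ 0 := ne_of_gt hx0
  have hx1' : x - 1 ≠ 0 := ne_of_lt (by linarith)
  have hxa' : x - a ≠ 0 := ne_of_lt (by linarith)
  have h1x : (1:ℝ) - x ≠ 0 := ne_of_gt (by linarith)
  have ha' : a ≠ 0 := ne_of_gt ha0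
  have h1τ : (1:ℝ) + τ ≠ 0 := by linarith
  subst hτ
  field_simp
  ring
end

section
/- Fix real numbers a > 1, q, α, β, γ with γ < 1 and 2−γ not a nonpositive integer, set ε = 0, τ = 1−γ and δ = α+β+τ. Let I ⊆ (0,1) be an open interval and let y : ℝ → ℝ be twice differentiable on I solving the Heun equation y'' + Py' + Qy = 0 (with these parameters) on I. Then for every x ∈ I the function x ↦ (1−x)^δ · ( τ[₂F₁(δ,τ;1+τ;x) + (δx/(1+τ))·₂F₁(δ+1,1+τ;2+τ;x)]·y(x) − x·₂F₁(δ,τ;1+τ;x)·y'(x) ) has derivative at x equal to ((1−x)^(δ−1)(αβx−q)/(a−x))·₂F₁(δ,τ;1+τ;x)·y(x). (This is the Lagrangian identity with auxiliary function h(x) = x^(1−γ)·₂F₁(δ,1−γ;2−γ;x), a solution of h'' + Ph' = 0.) -/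
set_option maxHeartbeats 1600000
open Real Filter Topology

private lemma good_summable {c : ℕ → ℝ} {K : ℝ}
    (hc : ∀ n : ℕ, |c (n+1)| ≤ (1 + K/((n:ℝ)+1)) * |c n|) {r : ℝ} (hr0 : 0 ≤ r) (hr : r < 1) :
    Summable (fun n => |c n| * r ^ n) := by
  apply summable_of_ratio_norm_eventually_le (r := (1+r)/2) (by linarith)
  have h0 : Tendsto (fun n : ℕ => K/((n:ℝ)+1)) atTop (𝓝 0) :=
    tendsto_const_nhds.div_atTop
      (tendsto_atTop_add_const_right atTop 1 tendsto_natCast_atTop_atTop)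
  have h1 : Tendsto (fun n : ℕ => (1 + K/((n:ℝ)+1)) * r) atTop (𝓝 ((1+0)*r)) :=
    (tendsto_const_nhds.add h0).mul_const r
  have h2 : ∀ᶠ n : ℕ in atTop, (1 + K/((n:ℝ)+1)) * r < (1+r)/2 :=
    h1.eventually_lt_const (by linarith)
  filter_upwards [h2] with n hn
  have hb := hc n
  have : |c (n+1)| * r^(n+1) ≤ ((1+r)/2) * (|c n| * r ^ n) := by
    have h3 : |c (n+1)| * r^(n+1) ≤ ((1 + K/((n:ℝ)+1)) * r) * (|c n| * r ^ n) := by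
      rw [pow_succ]
      have := mul_le_mul_of_nonneg_right hb (by positivity : (0:ℝ) ≤ r^n * r)
      nlinarith [abs_nonneg (c n), pow_nonneg hr0 n]
    refine le_trans h3 ?_
    have := mul_nonneg (abs_nonneg (c n)) (pow_nonneg hr0 n)
    nlinarith
  calc ‖|c (n+1)| * r^(n+1)‖ = |c (n+1)| * r^(n+1) := by
        rw [Real.norm_of_nonneg (by positivity)]
    _ ≤ ((1+r)/2) * (|c n| * r ^ n) := this
    _ = (1+r)/2 * ‖|c n| * r ^ n‖ := by rw [Real.norm_of_nonneg (by positivity)]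
private lemma good_summable_shift {c : ℕ → ℝ} {K : ℝ} (hK : 0 ≤ K)
    (hc : ∀ n : ℕ, |c (n+1)| ≤ (1 + K/((n:ℝ)+1)) * |c n|) {r : ℝ} (hr0 : 0 ≤ r) (hr : r < 1) :
    Summable (fun n : ℕ => ((n:ℝ)+1) * |c (n+1)| * r ^ n) := by
  apply summable_of_ratio_norm_eventually_le (r := (1+r)/2) (by linarith)
  have h0 : Tendsto (fun n : ℕ => (K+1)/((n:ℝ)+1)) atTop (𝓝 0) :=
    tendsto_const_nhds.div_atTop
      (tendsto_atTop_add_const_right atTop 1 tendsto_natCast_atTop_atTop)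
  have h1 : Tendsto (fun n : ℕ => (1 + (K+1)/((n:ℝ)+1)) * r) atTop (𝓝 ((1+0)*r)) :=
    (tendsto_const_nhds.add h0).mul_const r
  have h2 : ∀ᶠ n : ℕ in atTop, (1 + (K+1)/((n:ℝ)+1)) * r < (1+r)/2 :=
    h1.eventually_lt_const (by linarith)
  filter_upwards [h2] with n hn
  push_cast
  have hpos : (0:ℝ) < (n:ℝ)+1 := by positivity
  have hb : |c (n+1+1)| ≤ (1 + K/((n:ℝ)+1+1)) * |c (n+1)| := by
    have := hc (n+1); push_cast at this ⊢; convert this using 3 <;> ring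
  -- main chain
  have main : ((n:ℝ)+1+1) * |c (n+1+1)| * r^(n+1) ≤ ((1+r)/2) * (((n:ℝ)+1) * |c (n+1)| * r^n) := by
    have step1 : ((n:ℝ)+1+1) * |c (n+1+1)| ≤ ((n:ℝ)+1+1) * ((1 + K/((n:ℝ)+1+1)) * |c (n+1)|) :=
      mul_le_mul_of_nonneg_left hb (by positivity)
    have e1 : ((n:ℝ)+1+1) * (1 + K/((n:ℝ)+1+1)) = (n:ℝ)+2+K := by
      have hne : ((n:ℝ)+1+1) ≠ 0 := by positivity
      field_simp; ring
    have step2 : ((n:ℝ)+1+1) * ((1 + K/((n:ℝ)+1+1)) * |c (n+1)|) = ((n:ℝ)+2+K) * |c (n+1)| := by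
      rw [← mul_assoc, e1]
    have e2 : (1 + (K+1)/((n:ℝ)+1)) * ((n:ℝ)+1) = (n:ℝ)+2+K := by
      have hne : ((n:ℝ)+1) ≠ 0 := by positivity
      field_simp; ring
    have step3 : ((n:ℝ)+2+K) * |c (n+1)| ≤ (1 + (K+1)/((n:ℝ)+1)) * (((n:ℝ)+1) * |c (n+1)|) := by
      rw [← mul_assoc, e2]
    have hr' : (0:ℝ) ≤ r^n * r := by positivity
    calc ((n:ℝ)+1+1) * |c (n+1+1)| * r^(n+1)
        = (((n:ℝ)+1+1) * |c (n+1+1)|) * (r^n * r) := by ring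
      _ ≤ ((1 + (K+1)/((n:ℝ)+1)) * (((n:ℝ)+1) * |c (n+1)|)) * (r^n * r) := by
          apply mul_le_mul_of_nonneg_right _ hr'
          exact le_trans step1 (by rw [step2]; exact step3)
      _ = ((1 + (K+1)/((n:ℝ)+1)) * r) * (((n:ℝ)+1) * |c (n+1)| * r^n) := by ring
      _ ≤ ((1+r)/2) * (((n:ℝ)+1) * |c (n+1)| * r^n) := by
          apply mul_le_mul_of_nonneg_right (le_of_lt hn)
          positivity
  calc ‖((n:ℝ)+1+1) * |c (n+1+1)| * r^(n+1)‖ = ((n:ℝ)+1+1) * |c (n+1+1)| * r^(n+1) := by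
        rw [Real.norm_of_nonneg (by positivity)]
    _ ≤ ((1+r)/2) * (((n:ℝ)+1) * |c (n+1)| * r^n) := main
    _ = (1+r)/2 * ‖((n:ℝ)+1) * |c (n+1)| * r^n‖ := by rw [Real.norm_of_nonneg (by positivity)]
private lemma good_summable_at {c : ℕ → ℝ} {K : ℝ}
    (hc : ∀ n : ℕ, |c (n+1)| ≤ (1 + K/((n:ℝ)+1)) * |c n|) {x : ℝ} (hx : |x| < 1) :
    Summable (fun n : ℕ => c n * x ^ n) := by
  apply Summable.of_abs
  apply Summable.congr (good_summable hc (abs_nonneg x) hx)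
  intro n; rw [abs_mul, abs_pow]

private lemma good_summable_shift_at {c : ℕ → ℝ} {K : ℝ} (hK : 0 ≤ K)
    (hc : ∀ n : ℕ, |c (n+1)| ≤ (1 + K/((n:ℝ)+1)) * |c n|) {x : ℝ} (hx : |x| < 1) :
    Summable (fun n : ℕ => ((n:ℝ)+1) * c (n+1) * x ^ n) := by
  apply Summable.of_abs
  apply Summable.congr (good_summable_shift hK hc (abs_nonneg x) hx)
  intro n
  rw [abs_mul, abs_mul, abs_pow, abs_of_nonneg (by positivity : (0:ℝ) ≤ (n:ℝ)+1)]

private lemma good_hasDerivAt {c : ℕ → ℝ} {K : ℝ} (hK : 0 ≤ K)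
    (hc : ∀ n : ℕ, |c (n+1)| ≤ (1 + K/((n:ℝ)+1)) * |c n|) {x : ℝ} (hx : |x| < 1) :
    HasDerivAt (fun t => ∑' n : ℕ, c n * t ^ n) (∑' n : ℕ, ((n:ℝ)+1) * c (n+1) * x ^ n) x := by
  set r : ℝ := (1 + |x|)/2 with hr_def
  have hxr : |x| < r := by rw [hr_def]; linarith [abs_nonneg x]
  have hr0 : 0 ≤ r := by positivity
  have hr1 : r < 1 := by rw [hr_def]; linarith
  set u : ℕ → ℝ := fun n => (n:ℝ) * |c n| * r ^ (n-1) with hu_def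
  have hu : Summable u := by
    rw [← summable_nat_add_iff 1]
    apply Summable.congr (good_summable_shift hK hc hr0 hr1)
    intro n
    simp only [hu_def]
    push_cast
    ring_nf
  have hg : ∀ (n : ℕ) (t : ℝ), t ∈ Metric.ball (0:ℝ) r →
      HasDerivAt (fun z => c n * z ^ n) (c n * ((n:ℝ) * t ^ (n-1))) t :=
    fun n t _ => (hasDerivAt_pow n t).const_mul (c n)
  have hbound : ∀ (n : ℕ) (t : ℝ), t ∈ Metric.ball (0:ℝ) r →
      ‖c n * ((n:ℝ) * t ^ (n-1))‖ ≤ u n := by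
    intro n t ht
    rw [Metric.mem_ball, dist_zero_right, Real.norm_eq_abs] at ht
    rw [Real.norm_eq_abs, abs_mul, abs_mul, abs_pow,
      abs_of_nonneg (by positivity : (0:ℝ) ≤ (n:ℝ))]
    calc |c n| * ((n:ℝ) * |t| ^ (n-1)) ≤ |c n| * ((n:ℝ) * r ^ (n-1)) := by
          apply mul_le_mul_of_nonneg_left _ (abs_nonneg _)
          exact mul_le_mul_of_nonneg_left
            (pow_le_pow_left₀ (abs_nonneg t) (le_of_lt ht) _) (by positivity)
      _ = u n := by rw [hu_def]; ring
  have h0mem : (0:ℝ) ∈ Metric.ball (0:ℝ) r := by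
    rw [Metric.mem_ball, dist_zero_right, Real.norm_eq_abs, abs_zero]
    linarith [abs_nonneg x]
  have hxmem : x ∈ Metric.ball (0:ℝ) r := by
    rwa [Metric.mem_ball, dist_zero_right, Real.norm_eq_abs]
  have h00 : Summable (fun n : ℕ => c n * (0:ℝ) ^ n) := by
    apply summable_of_ne_finset_zero (s := {0})
    intro n hn
    have : n ≠ 0 := by simpa using hn
    rw [zero_pow this, mul_zero]
  have H := hasDerivAt_tsum_of_isPreconnected hu Metric.isOpen_ball
    (convex_ball (0:ℝ) r).isPreconnected hg hbound h0mem h00 hxmem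
  refine H.congr_deriv ?_
  symm
  have hs : Summable (fun n : ℕ => c n * ((n:ℝ) * x ^ (n-1))) :=
    Summable.of_norm_bounded hu (fun n => hbound n x hxmem)
  rw [Summable.tsum_eq_zero_add hs]
  simp only [Nat.cast_zero, zero_mul, mul_zero, zero_add, Nat.add_sub_cancel]
  apply tsum_congr
  intro n
  push_cast
  ring

private lemma asc_shift (t : ℝ) : ∀ n : ℕ,
    (ascPochhammer ℝ n).eval t * (t + n) = t * (ascPochhammer ℝ n).eval (t+1)
  | 0 => by simp
  | (n+1) => by
    rw [ascPochhammer_succ_eval, ascPochhammer_succ_eval]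
    have ih := asc_shift t n
    push_cast
    linear_combination ((t:ℝ) + n + 1) * ih

private noncomputable def kc (δ τ : ℝ) (n : ℕ) : ℝ :=
  (n.factorial : ℝ)⁻¹ * (ascPochhammer ℝ n).eval δ * (ascPochhammer ℝ n).eval τ *
    ((ascPochhammer ℝ n).eval (1+τ))⁻¹

private noncomputable def dc (δ τ : ℝ) (n : ℕ) : ℝ :=
  (n.factorial : ℝ)⁻¹ * (ascPochhammer ℝ n).eval (δ+1) * (ascPochhammer ℝ n).eval (1+τ) *
    ((ascPochhammer ℝ n).eval (2+τ))⁻¹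

private noncomputable def mc (δ τ : ℝ) (n : ℕ) : ℝ :=
  τ * (n.factorial : ℝ)⁻¹ * (ascPochhammer ℝ n).eval δ

-- recurrence for kc
private lemma kc_succ (δ τ : ℝ) (n : ℕ) :
    kc δ τ (n+1) = kc δ τ n * ((δ + n) * ((τ + n) * (((1+τ+(n:ℝ)))⁻¹ * (((n:ℝ)+1))⁻¹))) := by
  unfold kc
  rw [ascPochhammer_succ_eval, ascPochhammer_succ_eval, ascPochhammer_succ_eval,
    Nat.factorial_succ]
  push_cast
  rw [mul_inv, mul_inv]
  have : (1+τ+(n:ℝ)) = (1+τ)+(n:ℝ) := by ring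
  rw [this]
  ring

private lemma dc_succ (δ τ : ℝ) (n : ℕ) :
    dc δ τ (n+1) = dc δ τ n * ((δ + 1 + n) * ((1 + τ + n) * (((2+τ+(n:ℝ)))⁻¹ * (((n:ℝ)+1))⁻¹))) := by
  unfold dc
  rw [ascPochhammer_succ_eval, ascPochhammer_succ_eval, ascPochhammer_succ_eval,
    Nat.factorial_succ]
  push_cast
  rw [mul_inv, mul_inv]
  have h1 : (1+τ+(n:ℝ)) = (1+τ)+(n:ℝ) := by ring
  have h2 : (2+τ+(n:ℝ)) = (2+τ)+(n:ℝ) := by ring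
  rw [h1, h2]
  ring

private lemma mc_succ (δ τ : ℝ) (n : ℕ) :
    mc δ τ (n+1) = mc δ τ n * ((δ + n) * (((n:ℝ)+1))⁻¹) := by
  unfold mc
  rw [ascPochhammer_succ_eval, Nat.factorial_succ]
  push_cast
  rw [mul_inv]
  ring

private lemma ratio_bound (A B C : ℝ) (hB : 0 < B) (hC : C = 1 + B) (n : ℕ) :
    |(A+(n:ℝ)) * ((B+(n:ℝ)) * ((C+(n:ℝ))⁻¹ * ((n:ℝ)+1)⁻¹))| ≤ 1 + |A|/((n:ℝ)+1) := by
  subst hC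
  have h1 : (0:ℝ) < B + n := by positivity
  have h2 : (0:ℝ) < 1 + B + n := by positivity
  have h3 : (0:ℝ) < (n:ℝ)+1 := by positivity
  rw [abs_mul, abs_mul, abs_mul, abs_inv, abs_inv,
    abs_of_pos h1, abs_of_pos h2, abs_of_pos h3]
  have hA : |A + (n:ℝ)| ≤ |A| + n := by
    calc |A + (n:ℝ)| ≤ |A| + |(n:ℝ)| := abs_add_le _ _
    _ = |A| + n := by rw [Nat.abs_cast]
  have hd : (B+(n:ℝ)) * (1+B+(n:ℝ))⁻¹ ≤ 1 := by
    rw [← div_eq_mul_inv, div_le_one h2]; linarith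
  have hfrac : (B+(n:ℝ)) * ((1+B+(n:ℝ))⁻¹ * ((n:ℝ)+1)⁻¹) ≤ ((n:ℝ)+1)⁻¹ := by
    calc (B+(n:ℝ)) * ((1+B+(n:ℝ))⁻¹ * ((n:ℝ)+1)⁻¹)
        = ((B+(n:ℝ)) * (1+B+(n:ℝ))⁻¹) * ((n:ℝ)+1)⁻¹ := by ring
      _ ≤ 1 * ((n:ℝ)+1)⁻¹ := mul_le_mul_of_nonneg_right hd (by positivity)
      _ = ((n:ℝ)+1)⁻¹ := one_mul _
  have step : |A + (n:ℝ)| * ((B+(n:ℝ)) * ((1+B+(n:ℝ))⁻¹ * ((n:ℝ)+1)⁻¹))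
      ≤ (|A| + n) * ((n:ℝ)+1)⁻¹ :=
    mul_le_mul hA hfrac (by positivity) (by positivity)
  refine le_trans step ?_
  have hv : ((n:ℝ)+1) * ((n:ℝ)+1)⁻¹ = 1 := mul_inv_cancel₀ (ne_of_gt h3)
  have hv0 : (0:ℝ) ≤ ((n:ℝ)+1)⁻¹ := by positivity
  rw [div_eq_mul_inv]
  nlinarith [hv, hv0]

private lemma ratio_bound' (A : ℝ) (n : ℕ) :
    |(A+(n:ℝ)) * ((n:ℝ)+1)⁻¹| ≤ 1 + |A|/((n:ℝ)+1) := by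
  have h3 : (0:ℝ) < (n:ℝ)+1 := by positivity
  rw [abs_mul, abs_inv, abs_of_pos h3]
  have hA : |A + (n:ℝ)| ≤ |A| + n := by
    calc |A + (n:ℝ)| ≤ |A| + |(n:ℝ)| := abs_add_le _ _
    _ = |A| + n := by rw [Nat.abs_cast]
  have step : |A + (n:ℝ)| * ((n:ℝ)+1)⁻¹ ≤ (|A| + n) * ((n:ℝ)+1)⁻¹ :=
    mul_le_mul_of_nonneg_right hA (by positivity)
  refine le_trans step ?_
  have hv : ((n:ℝ)+1) * ((n:ℝ)+1)⁻¹ = 1 := mul_inv_cancel₀ (ne_of_gt h3)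
  have hv0 : (0:ℝ) ≤ ((n:ℝ)+1)⁻¹ := by positivity
  rw [div_eq_mul_inv]
  nlinarith [hv, hv0]

private lemma kc_good {δ τ : ℝ} (hτ : 0 < τ) (n : ℕ) :
    |kc δ τ (n+1)| ≤ (1 + |δ|/((n:ℝ)+1)) * |kc δ τ n| := by
  rw [kc_succ, abs_mul, mul_comm]
  exact mul_le_mul_of_nonneg_right (ratio_bound δ τ (1+τ) hτ rfl n) (abs_nonneg _)

private lemma dc_good {δ τ : ℝ} (hτ : 0 < τ) (n : ℕ) :
    |dc δ τ (n+1)| ≤ (1 + |δ+1|/((n:ℝ)+1)) * |dc δ τ n| := by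
  rw [dc_succ, abs_mul, mul_comm]
  refine mul_le_mul_of_nonneg_right ?_ (abs_nonneg _)
  have := ratio_bound (δ+1) (1+τ) (2+τ) (by linarith) (by ring) n
  convert this using 3 <;> push_cast <;> ring

private lemma mc_good {δ τ : ℝ} (n : ℕ) :
    |mc δ τ (n+1)| ≤ (1 + |δ|/((n:ℝ)+1)) * |mc δ τ n| := by
  rw [mc_succ, abs_mul, mul_comm]
  exact mul_le_mul_of_nonneg_right (ratio_bound' δ n) (abs_nonneg _)

private lemma ratio1 (t : ℝ) (ht : 0 < t) (n : ℕ) :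
    (ascPochhammer ℝ n).eval t * ((ascPochhammer ℝ n).eval (t+1))⁻¹
      = t * (t+(n:ℝ))⁻¹ := by
  have h1 := asc_shift t n
  have hp : (0:ℝ) < (ascPochhammer ℝ n).eval (t+1) := ascPochhammer_pos n _ (by linarith)
  have hq : (0:ℝ) < t + n := by positivity
  field_simp
  linarith [h1]

private lemma asc_left (t : ℝ) (n : ℕ) :
    (ascPochhammer ℝ (n+1)).eval t = t * (ascPochhammer ℝ n).eval (t+1) := by
  rw [ascPochhammer_succ_eval, asc_shift]

private lemma CI2 {δ τ : ℝ} (hτ : 0 < τ) (n : ℕ) :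
    ((n:ℝ)+1) * kc δ τ (n+1) = (δ*τ/(1+τ)) * dc δ τ n := by
  have h1τ : (0:ℝ) < 1 + τ := by linarith
  have e1' : (ascPochhammer ℝ (n+1)).eval τ * ((ascPochhammer ℝ (n+1)).eval (1+τ))⁻¹
      = τ * (τ+((n:ℝ)+1))⁻¹ := by
    rw [show (1:ℝ)+τ = τ+1 by ring]
    have := ratio1 τ hτ (n+1)
    push_cast at this
    exact this
  have e2' : (ascPochhammer ℝ n).eval (1+τ) * ((ascPochhammer ℝ n).eval (2+τ))⁻¹
      = (1+τ) * ((1+τ)+(n:ℝ))⁻¹ := by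
    rw [show (2:ℝ)+τ = (1+τ)+1 by ring]
    exact ratio1 (1+τ) h1τ n
  have key : kc δ τ (n+1)
      = (((n+1).factorial : ℝ))⁻¹ * (δ * (ascPochhammer ℝ n).eval (δ+1))
        * (τ * (τ+((n:ℝ)+1))⁻¹) := by
    unfold kc
    rw [asc_left δ n, mul_assoc, e1']
  have key2 : dc δ τ n
      = ((n.factorial : ℝ))⁻¹ * (ascPochhammer ℝ n).eval (δ+1)
        * ((1+τ) * ((1+τ)+(n:ℝ))⁻¹) := by
    unfold dc
    rw [mul_assoc, e2']
  rw [key, key2, Nat.factorial_succ]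
  have hf : (n.factorial : ℝ) ≠ 0 := Nat.cast_ne_zero.2 n.factorial_ne_zero
  have h1 : τ+((n:ℝ)+1) ≠ 0 := by positivity
  have h2 : (1+τ)+(n:ℝ) ≠ 0 := by positivity
  push_cast
  field_simp
  ring

private lemma CI1 {δ τ : ℝ} (hτ : 0 < τ) (n : ℕ) :
    mc δ τ (n+1) = τ * kc δ τ (n+1) + (δ*τ/(1+τ)) * dc δ τ n := by
  have h1τ : (0:ℝ) < 1 + τ := by linarith
  have e1' : (ascPochhammer ℝ (n+1)).eval τ * ((ascPochhammer ℝ (n+1)).eval (1+τ))⁻¹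
      = τ * (τ+((n:ℝ)+1))⁻¹ := by
    rw [show (1:ℝ)+τ = τ+1 by ring]
    have := ratio1 τ hτ (n+1)
    push_cast at this
    exact this
  have e2' : (ascPochhammer ℝ n).eval (1+τ) * ((ascPochhammer ℝ n).eval (2+τ))⁻¹
      = (1+τ) * ((1+τ)+(n:ℝ))⁻¹ := by
    rw [show (2:ℝ)+τ = (1+τ)+1 by ring]
    exact ratio1 (1+τ) h1τ n
  have key : kc δ τ (n+1)
      = (((n+1).factorial : ℝ))⁻¹ * (δ * (ascPochhammer ℝ n).eval (δ+1))
        * (τ * (τ+((n:ℝ)+1))⁻¹) := by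
    unfold kc
    rw [asc_left δ n, mul_assoc, e1']
  have key2 : dc δ τ n
      = ((n.factorial : ℝ))⁻¹ * (ascPochhammer ℝ n).eval (δ+1)
        * ((1+τ) * ((1+τ)+(n:ℝ))⁻¹) := by
    unfold dc
    rw [mul_assoc, e2']
  have key3 : mc δ τ (n+1)
      = τ * (((n+1).factorial : ℝ))⁻¹ * (δ * (ascPochhammer ℝ n).eval (δ+1)) := by
    unfold mc
    rw [asc_left δ n]
  rw [key, key2, key3, Nat.factorial_succ]
  have hf : (n.factorial : ℝ) ≠ 0 := Nat.cast_ne_zero.2 n.factorial_ne_zero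
  have h1 : τ+((n:ℝ)+1) ≠ 0 := by positivity
  have h2 : (1+τ)+(n:ℝ) ≠ 0 := by positivity
  push_cast
  field_simp
  ring

private lemma CI3 {δ τ : ℝ} (n : ℕ) :
    ((n:ℝ)+1) * mc δ τ (n+1) = (δ+(n:ℝ)) * mc δ τ n := by
  rw [mc_succ]
  have h3 : ((n:ℝ)+1) ≠ 0 := by positivity
  field_simp

private lemma F_eq (δ τ : ℝ) (x : ℝ) :
    ₂F₁ δ τ (1+τ) x = ∑' n : ℕ, kc δ τ n * x ^ n := by
  rw [ordinaryHypergeometric_eq_tsum]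
  exact tsum_congr fun n => by rw [smul_eq_mul]; rfl

private lemma F2_eq (δ τ : ℝ) (x : ℝ) :
    ₂F₁ (δ+1) (1+τ) (2+τ) x = ∑' n : ℕ, dc δ τ n * x ^ n := by
  rw [ordinaryHypergeometric_eq_tsum]
  exact tsum_congr fun n => by rw [smul_eq_mul]; rfl

private noncomputable def Gf (δ τ : ℝ) (t : ℝ) : ℝ := ∑' n : ℕ, mc δ τ n * t ^ n

private lemma B1 {δ τ : ℝ} (hτ : 0 < τ) {x : ℝ} (hx : |x| < 1) :
    τ * ₂F₁ δ τ (1+τ) x + (δ*τ/(1+τ)) * (x * ₂F₁ (δ+1) (1+τ) (2+τ) x) = Gf δ τ x := by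
  have hkS : Summable (fun n : ℕ => kc δ τ n * x^n) := good_summable_at (kc_good hτ) hx
  have hdS : Summable (fun n : ℕ => dc δ τ n * x^n) := good_summable_at (dc_good hτ) hx
  have hmS : Summable (fun n : ℕ => mc δ τ n * x^n) := good_summable_at (mc_good (δ := δ)) hx
  have hk1 : Summable (fun n : ℕ => kc δ τ (n+1) * x^(n+1)) :=
    (summable_nat_add_iff 1).2 hkS
  have hd1 : Summable (fun n : ℕ => dc δ τ n * x^(n+1)) := by
    apply (hdS.mul_left x).congr
    intro n; ring
  have hF : ₂F₁ δ τ (1+τ) x = 1 + ∑' n : ℕ, kc δ τ (n+1) * x^(n+1) := by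
    rw [F_eq, Summable.tsum_eq_zero_add hkS]
    simp [kc]
  have hF2 : x * ₂F₁ (δ+1) (1+τ) (2+τ) x = ∑' n : ℕ, dc δ τ n * x^(n+1) := by
    rw [F2_eq, ← tsum_mul_left]
    exact tsum_congr fun n => by ring
  have hG : Gf δ τ x = τ + ∑' n : ℕ, mc δ τ (n+1) * x^(n+1) := by
    rw [Gf, Summable.tsum_eq_zero_add hmS]
    simp [mc]
  have hmid : ∑' n : ℕ, mc δ τ (n+1) * x^(n+1)
      = τ * ∑' n : ℕ, kc δ τ (n+1) * x^(n+1)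
        + (δ*τ/(1+τ)) * ∑' n : ℕ, dc δ τ n * x^(n+1) := by
    rw [← tsum_mul_left, ← tsum_mul_left,
      ← Summable.tsum_add (hk1.mul_left τ) (hd1.mul_left (δ*τ/(1+τ)))]
    exact tsum_congr fun n => by rw [CI1 hτ n]; ring
  rw [hF, hF2, hG, hmid]
  ring

private lemma hasDerivAt_G {δ τ : ℝ} {x : ℝ} (hx : |x| < 1) :
    HasDerivAt (Gf δ τ) (∑' n : ℕ, ((n:ℝ)+1) * mc δ τ (n+1) * x ^ n) x :=
  good_hasDerivAt (abs_nonneg δ) (mc_good (δ := δ) (τ := τ)) hx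

private lemma G_deriv_eq {δ τ : ℝ} {x : ℝ} (hx : |x| < 1) :
    ∑' n : ℕ, ((n:ℝ)+1) * mc δ τ (n+1) * x ^ n
      = δ * Gf δ τ x + x * ∑' n : ℕ, ((n:ℝ)+1) * mc δ τ (n+1) * x ^ n := by
  have hmS : Summable (fun n : ℕ => mc δ τ n * x^n) := good_summable_at (mc_good (δ := δ)) hx
  have hS : Summable (fun n : ℕ => ((n:ℝ)+1) * mc δ τ (n+1) * x^n) :=
    good_summable_shift_at (abs_nonneg δ) (mc_good (δ := δ)) hx
  have hnS : Summable (fun n : ℕ => (n:ℝ) * mc δ τ n * x^n) := by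
    rw [← summable_nat_add_iff 1]
    apply (hS.mul_left x).congr
    intro n; push_cast; ring
  have h2 : ∑' n : ℕ, (n:ℝ) * mc δ τ n * x^n
      = x * ∑' n : ℕ, ((n:ℝ)+1) * mc δ τ (n+1) * x^n := by
    rw [Summable.tsum_eq_zero_add hnS, ← tsum_mul_left]
    push_cast
    simp only [Nat.cast_zero, zero_mul, zero_add]
    exact tsum_congr fun n => by push_cast; ring
  have h1 : ∑' n : ℕ, ((n:ℝ)+1) * mc δ τ (n+1) * x^n
      = δ * Gf δ τ x + ∑' n : ℕ, (n:ℝ) * mc δ τ n * x^n := by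
    rw [Gf, ← tsum_mul_left, ← Summable.tsum_add (hmS.mul_left δ) hnS]
    exact tsum_congr fun n => by
      have := CI3 (δ := δ) (τ := τ) n
      linear_combination x^n * this
  conv_lhs => rw [h1, h2]

private lemma G_const {δ τ : ℝ} (hτ : 0 < τ) {x : ℝ} (hx : |x| < 1) :
    (1-x) ^ δ * Gf δ τ x = τ := by
  set s : Set ℝ := Set.Ioo (-1 : ℝ) 1 with hs_def
  have hxs : x ∈ s := by
    rw [hs_def]
    exact ⟨(abs_lt.1 hx).1, (abs_lt.1 hx).2⟩
  have h0s : (0:ℝ) ∈ s := by rw [hs_def]; constructor <;> norm_num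
  have hd : ∀ t ∈ s, HasDerivAt (fun z => (1-z) ^ δ * Gf δ τ z) 0 t := by
    intro t ht
    rw [hs_def, Set.mem_Ioo] at ht
    have ht1 : (0:ℝ) < 1 - t := by linarith [ht.2]
    have htabs : |t| < 1 := abs_lt.2 ⟨ht.1, ht.2⟩
    have h1 : HasDerivAt (fun z : ℝ => (1-z) ^ δ) (-1 * δ * (1-t) ^ (δ-1)) t :=
      ((hasDerivAt_id t).const_sub 1).rpow_const (Or.inl (ne_of_gt ht1))
    have h2 := hasDerivAt_G (δ := δ) (τ := τ) htabs
    have h := h1.mul h2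
    have hode := G_deriv_eq (δ := δ) (τ := τ) htabs
    have hsplit : (1-t) ^ δ = (1-t) ^ (δ-1) * (1-t) := by
      rw [← Real.rpow_add_one (ne_of_gt ht1) (δ-1)]
      norm_num
    have hval : -1 * δ * (1-t) ^ (δ-1) * Gf δ τ t
        + (1-t) ^ δ * (∑' n : ℕ, ((n:ℝ)+1) * mc δ τ (n+1) * t ^ n) = 0 := by
      rw [hsplit]
      linear_combination (1-t) ^ (δ-1) * hode
    exact hval ▸ h
  have hΦ : (fun z => (1-z) ^ δ * Gf δ τ z) x = (fun z => (1-z) ^ δ * Gf δ τ z) 0 := by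
    refine Convex.is_const_of_fderivWithin_eq_zero (𝕜 := ℝ)
      (f := fun z : ℝ => (1-z) ^ δ * Gf δ τ z) (convex_Ioo (-1:ℝ) 1) ?_ ?_ hxs h0s
    · intro t ht
      exact ((hd t ht).differentiableAt).differentiableWithinAt
    · intro t ht
      rw [fderivWithin_of_isOpen isOpen_Ioo ht]
      have h := (hd t ht).hasFDerivAt
      rw [h.fderiv]
      ext v
      simp
  have hG0 : Gf δ τ 0 = τ := by
    rw [Gf]
    rw [tsum_eq_single 0 (fun n hn => by rw [zero_pow hn, mul_zero])]
    simp [mc]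
  simpa [hG0] using hΦ

private lemma hasDerivAt_F {δ τ : ℝ} (hτ : 0 < τ) {x : ℝ} (hx : |x| < 1) :
    HasDerivAt (fun t => ₂F₁ δ τ (1+τ) t)
      ((δ*τ/(1+τ)) * ₂F₁ (δ+1) (1+τ) (2+τ) x) x := by
  have hfun : (fun t : ℝ => ₂F₁ δ τ (1+τ) t) = fun t => ∑' n : ℕ, kc δ τ n * t ^ n :=
    funext (F_eq δ τ)
  rw [hfun]
  have h := good_hasDerivAt (abs_nonneg δ) (kc_good hτ (δ := δ)) hx
  convert h using 1
  rw [F2_eq, ← tsum_mul_left]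
  exact tsum_congr fun n => by rw [← mul_assoc, ← CI2 hτ n]

private lemma key_identity {δ τ : ℝ} (hτ : 0 < τ) {x : ℝ} (hx : |x| < 1) :
    (1-x) ^ δ * (₂F₁ δ τ (1+τ) x + δ*x/(1+τ) * ₂F₁ (δ+1) (1+τ) (2+τ) x) = 1 := by
  have h := B1 (δ := δ) hτ hx
  have h2 := G_const (δ := δ) hτ hx
  rw [← h] at h2
  have hτ' : τ ≠ 0 := ne_of_gt hτ
  have h3 : τ * ((1-x) ^ δ * (₂F₁ δ τ (1+τ) x + δ*x/(1+τ) * ₂F₁ (δ+1) (1+τ) (2+τ) x))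
      = τ * 1 := by
    rw [mul_one]
    linear_combination h2
  exact mul_left_cancel₀ hτ' h3




open Real

/-- Lagrangian identity for the Heun equation with `ε = 0` and auxiliary function
`h(x) = x^(1-γ) ₂F₁(δ, 1-γ; 2-γ; x)` (a solution of `h'' + P h' = 0`): with
`τ = 1-γ`, `δ = α+β+τ`, for any solution `y` on an open interval `I ⊆ (0,1)` (`a > 1`,
`γ < 1`, `2-γ` not a nonpositive integer), the function
`x ↦ (1-x)^δ (τ[₂F₁(δ,τ;1+τ;x) + (δx/(1+τ))₂F₁(δ+1,1+τ;2+τ;x)] y(x)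
  - x ₂F₁(δ,τ;1+τ;x) y'(x))`
has derivative `((1-x)^(δ-1)(αβx-q)/(a-x)) ₂F₁(δ,τ;1+τ;x) y(x)`. -/
theorem heun_integral_hypergeometric_h_epsilon_zero
    (a q α β γ τ δ : ℝ) (ha : 1 < a) (hγ : γ < 1)
    (hγint : ∀ n : ℕ, 2 - γ ≠ -(n : ℝ))
    (hτ : τ = 1 - γ) (hδ : δ = α + β + τ)
    (I : Set ℝ) (hI : IsOpen I) (hIconn : I.OrdConnected)
    (hIsub : I ⊆ Set.Ioo (0 : ℝ) 1)
    (y y' y'' : ℝ → ℝ)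
    (hy : ∀ x ∈ I, HasDerivAt y (y' x) x)
    (hy' : ∀ x ∈ I, HasDerivAt y' (y'' x) x)
    (hode : ∀ x ∈ I, y'' x
      + (γ / x + δ / (x - 1) + (0 : ℝ) / (x - a)) * y' x
      + ((α * β * x - q) / (x * (x - 1) * (x - a))) * y x = 0) :
    ∀ x ∈ I, HasDerivAt
      (fun t => (1 - t) ^ δ *
        (τ * (₂F₁ δ τ (1 + τ) t
            + δ * t / (1 + τ) * ₂F₁ (δ + 1) (1 + τ) (2 + τ) t) * y t
          - t * ₂F₁ δ τ (1 + τ) t * y' t))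
      ((1 - x) ^ (δ - 1) * (α * β * x - q) / (a - x)
        * ₂F₁ δ τ (1 + τ) x * y x) x := by
  intro x hx
  obtain ⟨hx0, hx1⟩ := hIsub hx
  have hτ0 : 0 < τ := by rw [hτ]; linarith
  have h1τ : (0:ℝ) < 1 + τ := by linarith
  have hxabs : |x| < 1 := abs_lt.2 ⟨by linarith, hx1⟩
  have h1x : (0:ℝ) < 1 - x := by linarith
  -- derivative of the simplified function V
  have hFd := hasDerivAt_F hτ0 (δ := δ) hxabs
  have hP : HasDerivAt (fun t : ℝ => (1-t) ^ δ) (-1 * δ * (1-x) ^ (δ-1)) x :=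
    ((hasDerivAt_id x).const_sub 1).rpow_const (Or.inl (ne_of_gt h1x))
  have hinner : HasDerivAt (fun t => t * ₂F₁ δ τ (1+τ) t * y' t)
      ((1 * ₂F₁ δ τ (1+τ) x + x * ((δ*τ/(1+τ)) * ₂F₁ (δ+1) (1+τ) (2+τ) x)) * y' x
        + x * ₂F₁ δ τ (1+τ) x * y'' x) x :=
    (((hasDerivAt_id x).mul hFd).mul (hy' x hx))
  have hV : HasDerivAt (fun t => τ * y t - (1-t) ^ δ * (t * ₂F₁ δ τ (1+τ) t * y' t))
      (τ * y' x - ((-1 * δ * (1-x) ^ (δ-1)) * (x * ₂F₁ δ τ (1+τ) x * y' x)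
        + (1-x) ^ δ * ((1 * ₂F₁ δ τ (1+τ) x
            + x * ((δ*τ/(1+τ)) * ₂F₁ (δ+1) (1+τ) (2+τ) x)) * y' x
          + x * ₂F₁ δ τ (1+τ) x * y'' x))) x :=
    ((hy x hx).const_mul τ).sub (hP.mul hinner)
  -- the original function agrees with V near x
  have hWV : (fun t => (1 - t) ^ δ *
        (τ * (₂F₁ δ τ (1 + τ) t
            + δ * t / (1 + τ) * ₂F₁ (δ + 1) (1 + τ) (2 + τ) t) * y t
          - t * ₂F₁ δ τ (1 + τ) t * y' t))
      =ᶠ[nhds x] (fun t => τ * y t - (1-t) ^ δ * (t * ₂F₁ δ τ (1+τ) t * y' t)) := by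
    filter_upwards [hI.mem_nhds hx] with t ht
    obtain ⟨ht0, ht1⟩ := hIsub ht
    have htabs : |t| < 1 := abs_lt.2 ⟨by linarith, ht1⟩
    have hk := key_identity hτ0 (δ := δ) htabs
    linear_combination τ * y t * hk
  -- identify the derivative value
  have hkx := key_identity hτ0 (δ := δ) hxabs
  have hsplit : (1-x) ^ δ = (1-x) ^ (δ-1) * (1-x) := by
    rw [← Real.rpow_add_one (ne_of_gt h1x) (δ-1)]
    norm_num
  have hx0' : x ≠ 0 := ne_of_gt hx0
  have hx1' : x - 1 ≠ 0 := by intro h; apply absurd hx1; linarith [h]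
  have hxa : x - a ≠ 0 := by intro h; nlinarith
  have hax : a - x ≠ 0 := by intro h; nlinarith
  have hw : y'' x = -((1-τ)/x)*y' x - (δ/(x-1))*y' x
      - ((α*β*x - q)/(x*(x-1)*(x-a)))*y x := by
    have h := hode x hx
    simp only [zero_div, zero_mul, add_zero] at h
    linear_combination h - (y' x / x) * hτ
  have hval : (τ * y' x - ((-1 * δ * (1-x) ^ (δ-1)) * (x * ₂F₁ δ τ (1+τ) x * y' x)
        + (1-x) ^ δ * ((1 * ₂F₁ δ τ (1+τ) x
            + x * ((δ*τ/(1+τ)) * ₂F₁ (δ+1) (1+τ) (2+τ) x)) * y' x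
          + x * ₂F₁ δ τ (1+τ) x * y'' x)))
      = (1 - x) ^ (δ - 1) * (α * β * x - q) / (a - x)
        * ₂F₁ δ τ (1 + τ) x * y x := by
    have hbr : (1-x) ^ δ * ((1 * ₂F₁ δ τ (1+τ) x
          + x * ((δ*τ/(1+τ)) * ₂F₁ (δ+1) (1+τ) (2+τ) x)) * y' x
          + x * ₂F₁ δ τ (1+τ) x * y'' x)
        = ((1-τ)*((1-x) ^ δ * ₂F₁ δ τ (1+τ) x) + τ) * y' x
          + (1-x) ^ δ * (x * ₂F₁ δ τ (1+τ) x * y'' x) := by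
      linear_combination τ * y' x * hkx
    rw [hbr, hw, hsplit]
    field_simp
    ring
  rw [← hval]
  exact hV.congr_of_eventuallyEq hWV
end

section
/- Let a, b, c be real numbers with c > 0, 1 + 2(a+b) ≠ 0 and 2(a+b+ab) − c + 1 ≠ 0. Set ρ₁ = (1 + 2(a+b+2ab))/(2[1 − c + 2(a+b+ab)]), ρ₂ = (1 + 2(a+b))/(2c), ρ₃ = 2c/(2(a+b+ab) − c + 1), and ω = 2ab/(1 + 2(a+b)). Then for every z ∈ (0,1) with ρ₂z < 1, the function z ↦ ρ₃ z^c (1−z)^(a+b+1−c) (1−ρ₂z)^(−ω) [ ₂F₁(a,b;c;z)/(1−ρ₂z) − ₂F₁(a+1,b+1;c+1;z) ] has derivative at z equal to z^c (1−z)^(a+b−c) (1−ρ₁z)(1−ρ₂z)^(−2−ω) ₂F₁(a,b;c;z). (Equivalently, ∫ z^c(1−z)^(a+b−c)(1−ρ₁z)(1−ρ₂z)^(−2−ω) ₂F₁(a,b;c;z)dz = ρ₃ z^c(1−z)^(a+b+1−c)(1−ρ₂z)^(−ω)[₂F₁(a,b;c;z)/(1−ρ₂z) − ₂F₁(a+1,b+1;c+1;z)]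 + c̃.) -/
open Real

open Filter Topology

noncomputable def hypCoeff (a b c : ℝ) (n : ℕ) : ℝ :=
  ((n.factorial : ℝ))⁻¹ * (ascPochhammer ℝ n).eval a * (ascPochhammer ℝ n).eval b *
    ((ascPochhammer ℝ n).eval c)⁻¹

lemma hypCoeff_succ (a b c : ℝ) (n : ℕ) :
    hypCoeff a b c (n+1) =
      hypCoeff a b c n * (a + n) * (b + n) * ((c + n)⁻¹ * ((n : ℝ) + 1)⁻¹) := by
  unfold hypCoeff
  rw [ascPochhammer_succ_eval, ascPochhammer_succ_eval, ascPochhammer_succ_eval,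
    Nat.factorial_succ]
  push_cast
  rw [mul_inv, mul_inv]
  ring

lemma poch_succ_left (n : ℕ) (x : ℝ) :
    (ascPochhammer ℝ (n+1)).eval x = x * (ascPochhammer ℝ n).eval (x+1) := by
  rw [ascPochhammer_succ_left]
  simp [Polynomial.eval_comp]

lemma hypCoeff_link (a b c : ℝ) (hc : c ≠ 0) (n : ℕ) :
    ((n:ℝ) + 1) * hypCoeff a b c (n+1) = a * b / c * hypCoeff (a+1) (b+1) (c+1) n := by
  have hn : ((n:ℝ) + 1) ≠ 0 := by positivity
  have h1 : ((n:ℝ)+1) * ((n:ℝ)+1)⁻¹ = 1 := mul_inv_cancel₀ hn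
  unfold hypCoeff
  rw [poch_succ_left, poch_succ_left, poch_succ_left, Nat.factorial_succ, div_eq_mul_inv]
  push_cast
  rw [mul_inv, mul_inv]
  linear_combination (((n.factorial : ℝ))⁻¹ * ((ascPochhammer ℝ n).eval (a+1)) * a *
    ((ascPochhammer ℝ n).eval (b+1)) * b * c⁻¹ * ((ascPochhammer ℝ n).eval (c+1))⁻¹) * h1

lemma hypCoeff_rec (a b c : ℝ) (hc : 0 < c) (n : ℕ) :
    (c + 1 + n) * hypCoeff (a+1) (b+1) (c+1) (n+1) =
      c * hypCoeff a b c (n+1) + (a + b + n + 1) * hypCoeff (a+1) (b+1) (c+1) n := by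
  have hn : ((n:ℝ) + 1) ≠ 0 := by positivity
  have hc1n : (c + 1 + n) ≠ 0 := by positivity
  have hc' : c ≠ 0 := ne_of_gt hc
  have h1 : ((n:ℝ)+1) * ((n:ℝ)+1)⁻¹ = 1 := mul_inv_cancel₀ hn
  have hc2 : c * c⁻¹ = 1 := mul_inv_cancel₀ hc'
  have h3 : (c + 1 + n) * (c + 1 + n)⁻¹ = 1 := mul_inv_cancel₀ hc1n
  have E2 := hypCoeff_link a b c hc' n
  rw [div_eq_mul_inv] at E2
  have hca : c * hypCoeff a b c (n+1) = a * b * ((n:ℝ)+1)⁻¹ * hypCoeff (a+1) (b+1) (c+1) n := by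
    linear_combination (c * ((n:ℝ)+1)⁻¹) * E2 - (c * hypCoeff a b c (n+1)) * h1
      + (a * b * ((n:ℝ)+1)⁻¹ * hypCoeff (a+1) (b+1) (c+1) n) * hc2
  rw [hca, hypCoeff_succ (a+1) (b+1) (c+1) n]
  have h4 : (a + 1 + n) * (b + 1 + n) = a*b + ((n:ℝ)+1)*(a+b+n+1) := by ring
  linear_combination (hypCoeff (a+1) (b+1) (c+1) n * (a+1+n) * (b+1+n) * ((n:ℝ)+1)⁻¹) * h3
    + ((a+b+n+1) * hypCoeff (a+1) (b+1) (c+1) n) * h1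

lemma tendsto_shift_div (x y : ℝ) :
    Filter.Tendsto (fun n : ℕ => (x + n) / (y + n)) atTop (nhds 1) := by
  have h1 : Filter.Tendsto (fun n : ℕ => x / n + 1) atTop (nhds (0 + 1 : ℝ)) :=
    (tendsto_const_div_atTop_nhds_zero_nat x).add tendsto_const_nhds
  have h2 : Filter.Tendsto (fun n : ℕ => y / n + 1) atTop (nhds (0 + 1 : ℝ)) :=
    (tendsto_const_div_atTop_nhds_zero_nat y).add tendsto_const_nhds
  rw [zero_add] at h1 h2
  have h3 := h1.div h2 one_ne_zero
  rw [div_one] at h3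
  apply h3.congr'
  filter_upwards [eventually_gt_atTop (max 0 ⌈|y|⌉₊)] with n hn
  have hn0 : (0:ℝ) < n := by
    exact_mod_cast Nat.cast_pos.mpr (lt_of_le_of_lt (le_max_left _ _) hn)
  have hyn : (0:ℝ) < y + n := by
    have h4 : |y| < n := by
      calc |y| ≤ ⌈|y|⌉₊ := Nat.le_ceil _
      _ < n := by exact_mod_cast lt_of_le_of_lt (le_max_right _ _) hn
    have := neg_abs_le y
    linarith
  have e1 : x / n + 1 = (x + n) / n := by field_simp
  have e2 : y / n + 1 = (y + n) / n := by field_simp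
  simp only [Pi.div_apply, e1, e2]
  field_simp

lemma tendsto_hyp_ratio (a b c r : ℝ) (hc : 0 < c) :
    Filter.Tendsto
      (fun n : ℕ => |a + n| * |b + n| * ((n:ℝ)+2) * r / ((c + n) * ((n:ℝ)+1) * ((n:ℝ)+1)))
      atTop (nhds r) := by
  have h1 := tendsto_shift_div a c
  have h2 := tendsto_shift_div b 1
  have h3 := tendsto_shift_div 2 1
  have H := ((h1.mul h2).mul h3).const_mul r
  rw [mul_one, mul_one, mul_one] at H
  apply H.congr'
  filter_upwards [eventually_ge_atTop (max ⌈|a|⌉₊ ⌈|b|⌉₊)] with n hn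
  have ha : (0:ℝ) ≤ a + n := by
    have h4 : |a| ≤ n := le_trans (Nat.le_ceil _)
      (by exact_mod_cast le_trans (le_max_left _ _) hn)
    have := neg_abs_le a; linarith
  have hb : (0:ℝ) ≤ b + n := by
    have h4 : |b| ≤ n := le_trans (Nat.le_ceil _)
      (by exact_mod_cast le_trans (le_max_right _ _) hn)
    have := neg_abs_le b; linarith
  have hcn : (0:ℝ) < c + n := by positivity
  have hn1 : (0:ℝ) < (n:ℝ) + 1 := by positivity
  rw [abs_of_nonneg ha, abs_of_nonneg hb]
  have e1 : ((n:ℝ) + 2) = 2 + (n:ℝ) := by ring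
  have e2 : ((n:ℝ) + 1) = 1 + (n:ℝ) := by ring
  rw [e1, e2]
  field_simp

lemma summable_hyp_aux (a b c r : ℝ) (hc : 0 < c) (hr0 : 0 < r) (hr1 : r < 1) :
    Summable (fun n => |hypCoeff a b c n| * ((n:ℝ)+1) * r^n) := by
  apply summable_of_ratio_norm_eventually_le (r := (1+r)/2) (by linarith)
  have hlt : r < (1+r)/2 := by linarith
  filter_upwards [(tendsto_hyp_ratio a b c r hc).eventually (eventually_le_nhds hlt)] with n hn
  have hcn : (0:ℝ) < c + n := by positivity
  have hn1 : (0:ℝ) < (n:ℝ) + 1 := by positivity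
  have key : |hypCoeff a b c (n+1)| * ((n:ℝ)+1+1) * r^(n+1) =
      (|hypCoeff a b c n| * ((n:ℝ)+1) * r^n) *
      (|a + n| * |b + n| * ((n:ℝ)+2) * r / ((c + n) * ((n:ℝ)+1) * ((n:ℝ)+1))) := by
    rw [hypCoeff_succ, abs_mul, abs_mul, abs_mul, abs_mul,
      abs_of_pos (inv_pos.mpr hcn), abs_of_pos (inv_pos.mpr hn1), pow_succ]
    field_simp
    ring
  have hnn : (0:ℝ) ≤ |hypCoeff a b c n| * ((n:ℝ)+1) * r^n := by positivity
  rw [Real.norm_eq_abs, Real.norm_eq_abs]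
  push_cast
  rw [abs_of_nonneg (by positivity), abs_of_nonneg hnn, key]
  calc (|hypCoeff a b c n| * ((n:ℝ)+1) * r^n) *
      (|a + n| * |b + n| * ((n:ℝ)+2) * r / ((c + n) * ((n:ℝ)+1) * ((n:ℝ)+1)))
      ≤ (|hypCoeff a b c n| * ((n:ℝ)+1) * r^n) * ((1+r)/2) := by
        exact mul_le_mul_of_nonneg_left hn hnn
    _ = (1+r)/2 * (|hypCoeff a b c n| * ((n:ℝ)+1) * r^n) := by ring
lemma summable_hyp_val (a b c : ℝ) (hc : 0 < c) {z r : ℝ} (hr0 : 0 < r) (hr1 : r < 1)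
    (hz : |z| ≤ r) : Summable (fun n : ℕ => hypCoeff a b c n * z^n) := by
  apply Summable.of_norm_bounded (summable_hyp_aux a b c r hc hr0 hr1)
  intro n
  rw [Real.norm_eq_abs, abs_mul, abs_pow]
  calc |hypCoeff a b c n| * |z|^n ≤ |hypCoeff a b c n| * r^n := by
        apply mul_le_mul_of_nonneg_left (pow_le_pow_left₀ (abs_nonneg z) hz n) (abs_nonneg _)
    _ ≤ |hypCoeff a b c n| * ((n:ℝ)+1) * r^n := by
        nlinarith [mul_nonneg (mul_nonneg (abs_nonneg (hypCoeff a b c n))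
          (Nat.cast_nonneg (α := ℝ) n)) (pow_nonneg hr0.le n)]

lemma summable_hyp_nval (a b c : ℝ) (hc : 0 < c) {z r : ℝ} (hr0 : 0 < r) (hr1 : r < 1)
    (hz : |z| ≤ r) : Summable (fun n : ℕ => (n:ℝ) * hypCoeff a b c n * z^n) := by
  apply Summable.of_norm_bounded (summable_hyp_aux a b c r hc hr0 hr1)
  intro n
  rw [Real.norm_eq_abs, abs_mul, abs_mul, abs_pow, Nat.abs_cast]
  have h2 : |z|^n ≤ r^n := pow_le_pow_left₀ (abs_nonneg z) hz n
  have h4 : (0:ℝ) ≤ (n:ℝ) := Nat.cast_nonneg n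
  nlinarith [abs_nonneg (hypCoeff a b c n), pow_nonneg (abs_nonneg z) n,
    pow_nonneg hr0.le n, mul_nonneg (abs_nonneg (hypCoeff a b c n)) h4]

lemma hasDerivAt_hyp_sum (a b c : ℝ) (hc : 0 < c) {z r : ℝ} (hr0 : 0 < r) (hr1 : r < 1)
    (hz : |z| < r) :
    HasDerivAt (fun t => ∑' n : ℕ, hypCoeff a b c n * t^n)
      (∑' n : ℕ, ((n:ℝ)+1) * hypCoeff a b c (n+1) * z^n) z := by
  set u : ℕ → ℝ := fun n => |hypCoeff a b c n| * ((n:ℝ)+1) * r^n / r with hu_def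
  have hu : Summable u := (summable_hyp_aux a b c r hc hr0 hr1).div_const r
  have hbound : ∀ (n : ℕ) (y : ℝ), y ∈ Set.Ioo (-r) r →
      ‖hypCoeff a b c n * ((n:ℝ) * y^(n-1))‖ ≤ u n := by
    intro n y hy
    have hyr : |y| ≤ r := le_of_lt (abs_lt.mpr ⟨hy.1, hy.2⟩)
    rw [Real.norm_eq_abs, abs_mul, abs_mul, abs_pow, Nat.abs_cast, hu_def]
    match n with
    | 0 => simp; positivity
    | (m+1) =>
      have h2 : |y|^m ≤ r^m := pow_le_pow_left₀ (abs_nonneg y) hyr m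
      simp only [Nat.add_sub_cancel]
      have e : r^(m+1)/r = r^m := by rw [pow_succ, mul_div_cancel_right₀ _ hr0.ne']
      rw [mul_div_assoc, e, ← mul_assoc]
      push_cast
      gcongr
      · linarith
  have hzmem : z ∈ Set.Ioo (-r) r := Set.mem_Ioo.mpr ⟨by linarith [(abs_lt.mp hz).1],
    (abs_lt.mp hz).2⟩
  have hD := hasDerivAt_tsum_of_isPreconnected hu isOpen_Ioo
    (isPreconnected_Ioo (a := -r) (b := r))
    (fun n y _ => (hasDerivAt_pow n y).const_mul (hypCoeff a b c n))
    hbound (Set.mem_Ioo.mpr ⟨by linarith, hr0⟩)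
    (by
      apply summable_of_ne_finset_zero (s := {0})
      intro n hn
      simp only [Finset.mem_singleton] at hn
      simp [zero_pow hn])
    hzmem
  refine hD.congr_deriv (Eq.symm ?_)
  have hS : Summable (fun n : ℕ => hypCoeff a b c n * ((n:ℝ) * z^(n-1))) :=
    Summable.of_norm_bounded hu (fun n => hbound n z hzmem)
  rw [Summable.tsum_eq_zero_add hS]
  simp only [Nat.cast_zero, zero_mul, mul_zero, zero_add, Nat.add_sub_cancel]
  apply tsum_congr
  intro n
  push_cast
  ring
lemma hyp_eq (a b c : ℝ) (x : ℝ) : ₂F₁ a b c x = ∑' n : ℕ, hypCoeff a b c n * x ^ n := by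
  rw [ordinaryHypergeometric_eq_tsum]
  simp [hypCoeff, smul_eq_mul]

lemma hypCoeff_zero (a b c : ℝ) : hypCoeff a b c 0 = 1 := by
  simp [hypCoeff]

lemma hasDerivAt_2F1 (a b c : ℝ) (hc : 0 < c) {z : ℝ} (hz0 : 0 < z) (hz1 : z < 1) :
    HasDerivAt (₂F₁ a b c) (a * b / c * ₂F₁ (a+1) (b+1) (c+1) z) z := by
  have hr0 : 0 < (1+z)/2 := by linarith
  have hr1 : (1+z)/2 < 1 := by linarith
  have hz : |z| < (1+z)/2 := by rw [abs_of_pos hz0]; linarith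
  have h := hasDerivAt_hyp_sum a b c hc hr0 hr1 hz
  have hfun : (fun t => ∑' n : ℕ, hypCoeff a b c n * t^n) = ₂F₁ a b c :=
    funext fun t => (hyp_eq a b c t).symm
  rw [hfun] at h
  convert h using 1
  rw [hyp_eq, ← tsum_mul_left]
  exact tsum_congr fun n => by linear_combination (-(z^n) : ℝ) * hypCoeff_link a b c hc.ne' n

set_option maxHeartbeats 1000000 in
lemma hasDerivAt_2F1' (a b c : ℝ) (hc : 0 < c) {z : ℝ} (hz0 : 0 < z) (hz1 : z < 1) :
    HasDerivAt (₂F₁ (a+1) (b+1) (c+1))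
      ((c * ₂F₁ a b c z - (c - (a+b+1)*z) * ₂F₁ (a+1) (b+1) (c+1) z) / (z*(1-z))) z := by
  have hc1 : 0 < c + 1 := by linarith
  have hr0 : 0 < (1+z)/2 := by linarith
  have hr1 : (1+z)/2 < 1 := by linarith
  have hz : |z| < (1+z)/2 := by rw [abs_of_pos hz0]; linarith
  have hzr : |z| ≤ (1+z)/2 := hz.le
  have h := hasDerivAt_hyp_sum (a+1) (b+1) (c+1) hc1 hr0 hr1 hz
  have hfun : (fun t => ∑' n : ℕ, hypCoeff (a+1) (b+1) (c+1) n * t^n) = ₂F₁ (a+1) (b+1) (c+1) :=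
    funext fun t => (hyp_eq (a+1) (b+1) (c+1) t).symm
  rw [hfun] at h
  set D := ∑' n : ℕ, ((n:ℝ)+1) * hypCoeff (a+1) (b+1) (c+1) (n+1) * z^n with hD
  set Fz := ₂F₁ a b c z
  set Gz := ₂F₁ (a+1) (b+1) (c+1) z
  -- summabilities
  have SF := summable_hyp_val a b c hc hr0 hr1 hzr
  have SG := summable_hyp_val (a+1) (b+1) (c+1) hc1 hr0 hr1 hzr
  have SGn := summable_hyp_nval (a+1) (b+1) (c+1) hc1 hr0 hr1 hzr
  have S1 : Summable (fun n : ℕ => hypCoeff a b c (n+1) * z^(n+1)) :=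
    (summable_nat_add_iff 1).mpr SF
  have S2 : Summable (fun n : ℕ => hypCoeff (a+1) (b+1) (c+1) (n+1) * z^(n+1)) :=
    (summable_nat_add_iff 1).mpr SG
  have SGs : Summable (fun n : ℕ => hypCoeff (a+1) (b+1) (c+1) n * z^(n+1)) :=
    (SG.mul_left z).congr fun n => by ring
  have SGns : Summable (fun n : ℕ => (n:ℝ) * hypCoeff (a+1) (b+1) (c+1) n * z^(n+1)) :=
    (SGn.mul_left z).congr fun n => by ring
  -- tsum evaluations
  have T1 : ∑' n : ℕ, hypCoeff a b c (n+1) * z^(n+1) = Fz - 1 := by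
    have h0 := Summable.tsum_eq_zero_add SF
    rw [hypCoeff_zero] at h0
    simp only [pow_zero, mul_one] at h0
    have : Fz = ∑' n : ℕ, hypCoeff a b c n * z^n := hyp_eq a b c z
    rw [this, h0]; ring
  have T2 : ∑' n : ℕ, hypCoeff (a+1) (b+1) (c+1) (n+1) * z^(n+1) = Gz - 1 := by
    have h0 := Summable.tsum_eq_zero_add SG
    rw [hypCoeff_zero] at h0
    simp only [pow_zero, mul_one] at h0
    have : Gz = ∑' n : ℕ, hypCoeff (a+1) (b+1) (c+1) n * z^n := hyp_eq (a+1) (b+1) (c+1) z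
    rw [this, h0]; ring
  have T3 : ∑' n : ℕ, hypCoeff (a+1) (b+1) (c+1) n * z^(n+1) = z * Gz := by
    have : Gz = ∑' n : ℕ, hypCoeff (a+1) (b+1) (c+1) n * z^n := hyp_eq (a+1) (b+1) (c+1) z
    rw [this, ← tsum_mul_left]
    exact tsum_congr fun n => by ring
  have T4 : ∑' n : ℕ, (n:ℝ) * hypCoeff (a+1) (b+1) (c+1) n * z^(n+1) = z * (z * D) := by
    rw [Summable.tsum_eq_zero_add SGns]
    simp only [Nat.cast_zero, zero_mul, zero_add]
    have e : z * (z * D) = z * (z * ∑' n : ℕ, ((n:ℝ)+1) * hypCoeff (a+1) (b+1) (c+1) (n+1) * z^n) := rfl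
    rw [e, ← tsum_mul_left, ← tsum_mul_left]
    exact tsum_congr fun n => by push_cast; ring
  -- key identity
  have key : z * D = c * (Fz - 1) - c * (Gz - 1) + (a+b+1) * (z * Gz) + z * (z * D) := by
    have e1 : z * D = ∑' n : ℕ, ((n:ℝ)+1) * hypCoeff (a+1) (b+1) (c+1) (n+1) * z^(n+1) := by
      rw [hD, ← tsum_mul_left]
      exact tsum_congr fun n => by ring
    have e2 : ∀ n : ℕ, ((n:ℝ)+1) * hypCoeff (a+1) (b+1) (c+1) (n+1) * z^(n+1) =
        c * (hypCoeff a b c (n+1) * z^(n+1)) +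
          ((a+b+1) * (hypCoeff (a+1) (b+1) (c+1) n * z^(n+1)) +
            (n:ℝ) * hypCoeff (a+1) (b+1) (c+1) n * z^(n+1) -
            c * (hypCoeff (a+1) (b+1) (c+1) (n+1) * z^(n+1))) := fun n => by
      linear_combination (z^(n+1)) * hypCoeff_rec a b c hc n
    calc z * D = ∑' n : ℕ, ((n:ℝ)+1) * hypCoeff (a+1) (b+1) (c+1) (n+1) * z^(n+1) := e1
    _ = ∑' n : ℕ, (c * (hypCoeff a b c (n+1) * z^(n+1)) +
          ((a+b+1) * (hypCoeff (a+1) (b+1) (c+1) n * z^(n+1)) +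
            (n:ℝ) * hypCoeff (a+1) (b+1) (c+1) n * z^(n+1) -
            c * (hypCoeff (a+1) (b+1) (c+1) (n+1) * z^(n+1)))) := tsum_congr e2
    _ = c * (Fz - 1) - c * (Gz - 1) + (a+b+1) * (z * Gz) + z * (z * D) := by
      rw [Summable.tsum_add (S1.mul_left c) (((SGs.mul_left (a+b+1)).add SGns).sub (S2.mul_left c)),
        Summable.tsum_sub ((SGs.mul_left (a+b+1)).add SGns) (S2.mul_left c),
        Summable.tsum_add (SGs.mul_left (a+b+1)) SGns,
        tsum_mul_left, tsum_mul_left, tsum_mul_left, T1, T2, T3, T4]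
      ring
  have hzz : z * (1 - z) ≠ 0 := by
    have : 0 < z * (1-z) := by nlinarith
    exact this.ne'
  have hDval : D = (c * Fz - (c - (a+b+1)*z) * Gz) / (z*(1-z)) := by
    rw [eq_div_iff hzz]
    linear_combination key
  rw [← hDval]
  exact h

set_option maxHeartbeats 1000000 in
/-- New indefinite integral for the Gauss hypergeometric function: with
`ρ₁ = (1+2(a+b+2ab))/(2[1-c+2(a+b+ab)])`, `ρ₂ = (1+2(a+b))/(2c)`,
`ρ₃ = 2c/(2(a+b+ab)-c+1)`, `ω = 2ab/(1+2(a+b))`, for `c > 0` and every `z ∈ (0,1)`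
with `ρ₂ z < 1`, the function
`z ↦ ρ₃ z^c (1-z)^(a+b+1-c) (1-ρ₂z)^(-ω) [₂F₁(a,b;c;z)/(1-ρ₂z) - ₂F₁(a+1,b+1;c+1;z)]`
has derivative `z^c (1-z)^(a+b-c) (1-ρ₁z)(1-ρ₂z)^(-2-ω) ₂F₁(a,b;c;z)` at `z`. -/
theorem hypergeometric_integral_rho
    (a b c ρ₁ ρ₂ ρ₃ ω : ℝ) (hc : 0 < c)
    (hab : 1 + 2 * (a + b) ≠ 0) (habc : 2 * (a + b + a * b) - c + 1 ≠ 0)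
    (hρ₁ : ρ₁ = (1 + 2 * (a + b + 2 * a * b)) / (2 * (1 - c + 2 * (a + b + a * b))))
    (hρ₂ : ρ₂ = (1 + 2 * (a + b)) / (2 * c))
    (hρ₃ : ρ₃ = 2 * c / (2 * (a + b + a * b) - c + 1))
    (hω : ω = 2 * a * b / (1 + 2 * (a + b))) :
    ∀ z ∈ Set.Ioo (0 : ℝ) 1, ρ₂ * z < 1 →
      HasDerivAt
        (fun t => ρ₃ * t ^ c * (1 - t) ^ (a + b + 1 - c) * (1 - ρ₂ * t) ^ (-ω)
          * (₂F₁ a b c t / (1 - ρ₂ * t) - ₂F₁ (a + 1) (b + 1) (c + 1) t))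
        (z ^ c * (1 - z) ^ (a + b - c) * (1 - ρ₁ * z) * (1 - ρ₂ * z) ^ (-2 - ω)
          * ₂F₁ a b c z) z := by
  intro z hz hq
  obtain ⟨hz0, hz1⟩ := hz
  have h1z : 0 < 1 - z := by linarith
  have hqz : 0 < 1 - ρ₂ * z := by linarith
  have HF := hasDerivAt_2F1 a b c hc hz0 hz1
  have HG := hasDerivAt_2F1' a b c hc hz0 hz1
  have hP : HasDerivAt (fun t : ℝ => t ^ c) (c * z ^ (c - 1)) z :=
    Real.hasDerivAt_rpow_const (Or.inl hz0.ne')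
  have hQi : HasDerivAt (fun t : ℝ => 1 - t) (-1) z := (hasDerivAt_id z).const_sub 1
  have hQ : HasDerivAt (fun t : ℝ => (1 - t) ^ (a + b + 1 - c))
      ((a + b + 1 - c) * (1 - z) ^ (a + b + 1 - c - 1) * (-1)) z :=
    (Real.hasDerivAt_rpow_const (p := a + b + 1 - c) (Or.inl h1z.ne')).comp z hQi
  have hRi : HasDerivAt (fun t : ℝ => 1 - ρ₂ * t) (-ρ₂) z := by
    simpa using ((hasDerivAt_id z).const_mul ρ₂).const_sub 1
  have hR : HasDerivAt (fun t : ℝ => (1 - ρ₂ * t) ^ (-ω))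
      ((-ω) * (1 - ρ₂ * z) ^ (-ω - 1) * (-ρ₂)) z :=
    by have h := (Real.hasDerivAt_rpow_const (x := 1 - ρ₂ * z) (p := -ω) (Or.inl hqz.ne')).comp z hRi; exact h
  have hS : HasDerivAt (fun t : ℝ => ₂F₁ a b c t / (1 - ρ₂ * t))
      ((a * b / c * ₂F₁ (a+1) (b+1) (c+1) z * (1 - ρ₂ * z) - ₂F₁ a b c z * (-ρ₂))
        / (1 - ρ₂ * z) ^ 2) z := HF.div hRi hqz.ne'
  have hbig := (((hP.const_mul ρ₃).mul hQ).mul hR).mul (hS.sub HG)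
  refine hbig.congr_deriv (Eq.symm ?_)
  simp only [Pi.mul_apply, Pi.sub_apply]
  beta_reduce
  have e1 : z ^ (c - 1) = z ^ c / z := by
    rw [Real.rpow_sub hz0, Real.rpow_one]
  have e2 : (1 - z) ^ (a + b + 1 - c) = (1 - z) ^ (a + b - c) * (1 - z) := by
    rw [show a + b + 1 - c = (a + b - c) + 1 by ring, Real.rpow_add_one h1z.ne']
  have e2' : (1 - z) ^ (a + b + 1 - c - 1) = (1 - z) ^ (a + b - c) := by
    rw [show a + b + 1 - c - 1 = a + b - c by ring]
  have e3 : (1 - ρ₂ * z) ^ (-ω) = (1 - ρ₂ * z) ^ (-2 - ω) * (1 - ρ₂ * z) * (1 - ρ₂ * z) := by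
    rw [show -ω = (-2 - ω) + 1 + 1 by ring, Real.rpow_add_one hqz.ne',
      Real.rpow_add_one hqz.ne']
  have e4 : (1 - ρ₂ * z) ^ (-ω - 1) = (1 - ρ₂ * z) ^ (-2 - ω) * (1 - ρ₂ * z) := by
    rw [show -ω - 1 = (-2 - ω) + 1 by ring, Real.rpow_add_one hqz.ne']
  rw [e1, e2, e2', e3, e4]
  have hd1 : (1 : ℝ) - c + 2 * (a + b + a * b) ≠ 0 := fun h => habc (by linarith)
  set F := ₂F₁ a b c z with hF
  set G := ₂F₁ (a+1) (b+1) (c+1) z with hG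
  set X := z ^ c with hX
  set Y := (1 - z) ^ (a + b - c) with hY
  set W := (1 - ρ₂ * z) ^ (-2 - ω) with hW
  clear_value F G X Y W
  set q := 1 - ρ₂ * z with hqq
  have hqne : q ≠ 0 := hqz.ne'
  have key : ρ₃ * (((c*(1-z)/z - (a+b+1-c)) * (q*q) + (1-z)*ω*ρ₂*q) * (F/q - G)
      + (1-z)*(a*b/c*G*q + ρ₂*F) - q*q*(c*F - (c-(a+b+1)*z)*G)/z) = (1 - ρ₁*z)*F := by
    rw [hqq]
    subst hρ₁ hρ₂ hρ₃ hω
    have hK : 2*c - (1 + 2*(a+b))*z ≠ 0 := by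
      have h2 : 0 < (1 - (1 + 2 * (a + b)) / (2 * c) * z) * (2*c) := by positivity
      have h3 : (1 - (1 + 2 * (a + b)) / (2 * c) * z) * (2*c) = 2*c - (1 + 2*(a+b))*z := by
        field_simp
      rw [h3] at h2
      exact h2.ne'
    have hK2 : 2 * c - z * (1 + 2 * (a + b)) ≠ 0 := by rw [mul_comm z]; exact hK
    field_simp
    ring
  calc X * Y * (1 - ρ₁ * z) * W * F
      = X * Y * W * ((1 - ρ₁*z) * F) := by ring
    _ = X * Y * W * (ρ₃ * (((c*(1-z)/z - (a+b+1-c)) * (q*q) + (1-z)*ω*ρ₂*q) * (F/q - G)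
        + (1-z)*(a*b/c*G*q + ρ₂*F) - q*q*(c*F - (c-(a+b+1)*z)*G)/z)) := by rw [key]
    _ = _ := by
        field_simp
        ring
end

section
/- Let a be a real number with a ≠ 0 and a ≠ 1/4. For z ∈ (0,1) define ψ(z) = arcsin√(1 − √(1−z)) and F(φ,k) = ∫₀^φ dθ/√(1−k²sin²θ) (the incomplete elliptic integral of the first kind). Then for every z ∈ (0,1), the function z ↦ (√2/(a(4a−1)))·₂F₁(a, 1/4−a; 1/2; z) + 2z^(1/2)(1−z)^(3/4) F(ψ(z), 1/√2)·₂F₁(a+1, 5/4−a; 3/2; z) has derivative at z equal to z^(−1/2)(1−z)^(−1/4) F(ψ(z), 1/√2)·₂F₁(a, 1/4−a; 1/2; z). (Equivalently, ∫ z^(−1/2)(1−z)^(−1/4) F(ψ(z),1/√2) ₂F₁(a,1/4−a;1/2;z)dz = (√2/(a(4a−1)))₂F₁(a,1/4−a;1/2;z) + 2z^(1/2)(1−z)^(3/4) F(ψ(z),1/√2) ₂F₁(a+1,5/4−a;3/2;z) + c.) -/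
open Real intervalIntegral
open scoped ENNReal NNReal

noncomputable def hgc (a b c : ℝ) (n : ℕ) : ℝ := ordinaryHypergeometricCoefficient a b c n

lemma hgc_eq (a b c : ℝ) (n : ℕ) : hgc a b c n = ordinaryHypergeometricCoefficient a b c n := rfl


lemma pochEval_succ_left (x : ℝ) (n : ℕ) :
    (ascPochhammer ℝ (n+1)).eval x = x * (ascPochhammer ℝ n).eval (x+1) := by
  rw [ascPochhammer_succ_left]
  simp [Polynomial.eval_comp]

lemma hgc_step (a b c : ℝ) (n : ℕ) :
    ((n : ℝ) + 1) * hgc a b c (n+1) = (a * b / c) * hgc (a+1) (b+1) (c+1) n := by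
  unfold hgc ordinaryHypergeometricCoefficient
  rw [pochEval_succ_left a, pochEval_succ_left b, pochEval_succ_left c]
  have e1 : (((n+1).factorial : ℕ) : ℝ)⁻¹ = ((n:ℝ)+1)⁻¹ * ((n.factorial : ℕ):ℝ)⁻¹ := by
    rw [Nat.factorial_succ]; push_cast; rw [mul_inv]
  rw [e1, mul_inv, div_eq_mul_inv]
  have hn : ((n : ℝ) + 1) ≠ 0 := by positivity
  have h2 : ((n:ℝ)+1) * ((n:ℝ)+1)⁻¹ = 1 := mul_inv_cancel₀ hn
  linear_combination (((n.factorial : ℕ):ℝ)⁻¹ * (a * (ascPochhammer ℝ n).eval (a+1)) *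
    (b * (ascPochhammer ℝ n).eval (b+1)) * (c⁻¹ * ((ascPochhammer ℝ n).eval (c+1))⁻¹)) * h2

lemma hgc_zero (a b c : ℝ) : hgc a b c 0 = 1 := by
  simp [hgc, ordinaryHypergeometricCoefficient]

lemma hg_radius (a b c : ℝ) (hc : 0 < c) :
    1 ≤ (ordinaryHypergeometricSeries ℝ a b c).radius := by
  by_cases habc : ∀ kn : ℕ, (kn : ℝ) ≠ -a ∧ (kn : ℝ) ≠ -b ∧ (kn : ℝ) ≠ -c
  · rw [ordinaryHypergeometricSeries_radius_eq_one ℝ a b c habc]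
  · push_neg at habc
    obtain ⟨k, hk⟩ := habc
    have hkc : (k : ℝ) ≠ -c := by
      intro h; nlinarith [Nat.cast_nonneg (α := ℝ) k]
    by_cases h : (k:ℝ) = -a
    · have ha : a = -(k : ℝ) := by linarith
      rw [ha, ordinaryHypergeometric_radius_top_of_neg_nat₁]
      exact le_top
    · have hb : b = -(k : ℝ) := by
        by_cases h' : (k:ℝ) = -b
        · linarith
        · exact absurd (hk h h') hkc
      rw [hb, ordinaryHypergeometric_radius_top_of_neg_nat₂]
      exact le_top

lemma hg_hasSum (a b c : ℝ) (h1 : 1 ≤ (ordinaryHypergeometricSeries ℝ a b c).radius)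
    {z : ℝ} (hz : |z| < 1) :
    HasSum (fun n => ordinaryHypergeometricCoefficient a b c n * z ^ n) (₂F₁ a b c z) := by
  have h2 : ‖z‖₊ < 1 := by
    rw [← NNReal.coe_lt_coe]; simpa [coe_nnnorm, Real.norm_eq_abs] using hz
  have hmem : z ∈ Metric.eball (0 : ℝ) (ordinaryHypergeometricSeries ℝ a b c).radius := by
    rw [mem_emetric_ball_zero_iff]
    exact lt_of_lt_of_le (by rw [enorm_eq_nnnorm]; exact_mod_cast h2) h1
  have h3 := (ordinaryHypergeometricSeries ℝ a b c).hasSum hmem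
  have heq : (fun n => (ordinaryHypergeometricSeries ℝ a b c n) fun _ => z)
      = fun n => ordinaryHypergeometricCoefficient a b c n * z ^ n := by
    funext n; rw [ordinaryHypergeometricSeries_apply_eq, smul_eq_mul]
  rw [heq] at h3
  exact h3

theorem hg_hasDerivAt (a b c : ℝ)
    (h1 : 1 ≤ (ordinaryHypergeometricSeries ℝ a b c).radius)
    (h2 : 1 ≤ (ordinaryHypergeometricSeries ℝ (a+1) (b+1) (c+1)).radius)
    {z : ℝ} (hz : |z| < 1) :
    HasDerivAt (fun t => ₂F₁ a b c t)
      (a * b / c * ₂F₁ (a+1) (b+1) (c+1) z) z := by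
  set κ := fun n => hgc a b c n with hκ
  set r : ℝ := (|z| + 1) / 2 with hrdef
  set r' : ℝ := (r + 1) / 2 with hr'def
  have habs : 0 ≤ |z| := abs_nonneg z
  have hr0 : 0 < r := by positivity
  have hzr : |z| < r := by rw [hrdef]; linarith
  have hrr' : r < r' := by rw [hr'def]; linarith [hzr, habs]
  have hr1 : r < 1 := by rw [hrdef]; linarith
  have hr'1 : r' < 1 := by rw [hr'def]; linarith
  have hr'0 : 0 < r' := lt_trans hr0 hrr'
  -- bound on coefficients
  set r'nn : ℝ≥0 := ⟨r', hr'0.le⟩ with hr'nn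
  have hrad : (r'nn : ℝ≥0∞) < (ordinaryHypergeometricSeries ℝ a b c).radius := by
    refine lt_of_lt_of_le ?_ h1
    rw [show ((1:ℝ≥0∞)) = ((1 : ℝ≥0) : ℝ≥0∞) from rfl, ENNReal.coe_lt_coe, ← NNReal.coe_lt_coe]
    exact hr'1
  obtain ⟨C, hC0, hC⟩ :=
    (ordinaryHypergeometricSeries ℝ a b c).norm_mul_pow_le_of_lt_radius hrad
  have hCk : ∀ n, |κ n| * r' ^ n ≤ C := by
    intro n
    have := hC n
    rwa [ordinaryHypergeometricSeries, FormalMultilinearSeries.ofScalars_norm] at this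
  -- summable bound
  set u : ℕ → ℝ := fun n => C / r * ((n : ℝ) * (r / r') ^ n) with hu_def
  have hq : ‖r / r'‖ < 1 := by
    rw [Real.norm_eq_abs, abs_of_pos (by positivity)]
    rw [div_lt_one hr'0]; exact hrr'
  have hu : Summable u := by
    have := summable_pow_mul_geometric_of_norm_lt_one (R := ℝ) 1 hq
    simpa using this.mul_left (C / r)
  -- bound on derivatives
  have hbound : ∀ n, ∀ y ∈ Set.Ioo (-r) r, ‖κ n * ((n : ℝ) * y ^ (n - 1))‖ ≤ u n := by
    intro n y hy
    have hyr : |y| ≤ r := by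
      rw [abs_le]; exact ⟨hy.1.le, hy.2.le⟩
    have h1n : |κ n| ≤ C / r' ^ n := (le_div_iff₀ (pow_pos hr'0 n)).2 (hCk n)
    have habs' : ‖κ n * ((n : ℝ) * y ^ (n - 1))‖ = |κ n| * ((n:ℝ) * |y| ^ (n-1)) := by
      rw [Real.norm_eq_abs, abs_mul]
      congr 1
      rw [abs_mul, abs_pow, Nat.abs_cast]
    rw [habs']
    calc |κ n| * ((n:ℝ) * |y| ^ (n-1)) ≤ (C / r' ^ n) * ((n:ℝ) * r ^ (n-1)) := by
          apply mul_le_mul h1n ?_ (by positivity) (by positivity)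
          exact mul_le_mul_of_nonneg_left (pow_le_pow_left₀ (abs_nonneg y) hyr _) (by positivity)
      _ ≤ u n := by
          rw [hu_def]
          cases n with
          | zero => simp
          | succ m =>
            apply le_of_eq
            simp only [Nat.add_sub_cancel, div_pow]
            field_simp
            ring
  -- termwise derivatives
  have hg : ∀ n, ∀ y ∈ Set.Ioo (-r) r,
      HasDerivAt (fun t => κ n * t ^ n) (κ n * ((n : ℝ) * y ^ (n - 1))) y :=
    fun n y _ => (hasDerivAt_pow n y).const_mul (κ n)
  have hzmem : z ∈ Set.Ioo (-r) r := by rw [Set.mem_Ioo, ← abs_lt]; exact hzr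
  have hsum0 : Summable fun n => κ n * z ^ n := (hg_hasSum a b c h1 hz).summable
  have hmain := hasDerivAt_tsum_of_isPreconnected hu isOpen_Ioo (isPreconnected_Ioo)
    hg hbound hzmem hsum0 hzmem
  -- identify the function
  have hfun : (fun y => ∑' n, κ n * y ^ n) = fun t => ₂F₁ a b c t := by
    funext t
    rw [ordinaryHypergeometric_eq_tsum]
    apply tsum_congr
    intro n
    rw [smul_eq_mul]
    rfl
  rw [hfun] at hmain
  -- identify the derivative
  have hs : Summable fun n => κ n * ((n : ℝ) * z ^ (n - 1)) :=
    Summable.of_norm_bounded hu (fun n => hbound n z hzmem)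
  have hder : (∑' n, κ n * ((n : ℝ) * z ^ (n - 1)))
      = a * b / c * ₂F₁ (a+1) (b+1) (c+1) z := by
    rw [Summable.tsum_eq_zero_add hs]
    simp only [Nat.cast_zero, zero_mul, mul_zero, zero_add]
    have hterm : ∀ n : ℕ, κ (n+1) * (((n+1 : ℕ) : ℝ) * z ^ ((n+1) - 1))
        = a * b / c * (hgc (a+1) (b+1) (c+1) n * z ^ n) := by
      intro n
      have := hgc_step a b c n
      push_cast
      linear_combination z ^ n * this
    calc (∑' n, κ (n+1) * (((n+1 : ℕ) : ℝ) * z ^ ((n+1) - 1)))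
        = ∑' n, a * b / c * (hgc (a+1) (b+1) (c+1) n * z ^ n) := tsum_congr hterm
      _ = a * b / c * ∑' n, hgc (a+1) (b+1) (c+1) n * z ^ n := tsum_mul_left
      _ = a * b / c * ₂F₁ (a+1) (b+1) (c+1) z := by
          simp only [hgc_eq]
          rw [(hg_hasSum (a+1) (b+1) (c+1) h2 hz).tsum_eq]
  rw [hder] at hmain
  exact hmain

-- key coefficient identity
lemma hgc_key (a : ℝ) (m : ℕ) :
    hgc a (1/4-a) (1/2) (m+1)
      = (2*(m:ℝ)+3) * hgc (a+1) (5/4-a) (3/2) (m+1)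
        - (2*(m:ℝ)+5/2) * hgc (a+1) (5/4-a) (3/2) m := by
  set Ea := (ascPochhammer ℝ m).eval (a+1) with hEa
  set Eb := (ascPochhammer ℝ m).eval (5/4-a) with hEb
  set Ec := (ascPochhammer ℝ m).eval (3/2 : ℝ) with hEc
  have hEc0 : (0:ℝ) < Ec := ascPochhammer_pos m _ (by norm_num)
  have e1 : (1/4 - a) + 1 = 5/4 - a := by ring
  have e2 : (1/2 : ℝ) + 1 = 3/2 := by norm_num
  have hg1 : hgc a (1/4-a) (1/2) (m+1)
      = (((m:ℝ)+1) * (m.factorial:ℝ))⁻¹ * (a * Ea) * ((1/4-a) * Eb) * ((1/2) * Ec)⁻¹ := by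
    unfold hgc ordinaryHypergeometricCoefficient
    rw [pochEval_succ_left, pochEval_succ_left, pochEval_succ_left, e1, e2,
      Nat.factorial_succ]
    push_cast
    ring
  have hh1 : hgc (a+1) (5/4-a) (3/2) (m+1)
      = (((m:ℝ)+1) * (m.factorial:ℝ))⁻¹ * (Ea * ((a+1)+m)) * (Eb * ((5/4-a)+m))
        * (Ec * ((3/2)+m))⁻¹ := by
    unfold hgc ordinaryHypergeometricCoefficient
    rw [ascPochhammer_succ_eval, ascPochhammer_succ_eval, ascPochhammer_succ_eval,
      Nat.factorial_succ]
    push_cast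
    ring
  have hh0 : hgc (a+1) (5/4-a) (3/2) m = (m.factorial:ℝ)⁻¹ * Ea * Eb * Ec⁻¹ := rfl
  rw [hg1, hh1, hh0]
  have f1 : ((m:ℝ)+1) ≠ 0 := by positivity
  have f2 : (m.factorial : ℝ) ≠ 0 := by positivity
  have f3 : Ec ≠ 0 := ne_of_gt hEc0
  have f4 : (3/2 + (m:ℝ)) ≠ 0 := by positivity
  field_simp
  ring

theorem hg_contiguous (a : ℝ) {z : ℝ} (hz : |z| < 1) :
    ₂F₁ a (1/4 - a) (1/2) z
      = (1 - 5/2 * z) * ₂F₁ (a+1) (5/4 - a) (3/2) z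
        + 2*z*(1-z) * ((a+1) * (5/4 - a) / (3/2)
            * ₂F₁ (a+1+1) ((5/4-a)+1) ((3/2)+1) z) := by
  have SH : HasSum (fun n => hgc (a+1) (5/4-a) (3/2) n * z ^ n) (₂F₁ (a+1) (5/4 - a) (3/2) z) :=
    hg_hasSum _ _ _ (hg_radius _ _ _ (by norm_num)) hz
  have SG : HasSum (fun n => hgc a (1/4-a) (1/2) n * z ^ n) (₂F₁ a (1/4 - a) (1/2) z) :=
    hg_hasSum _ _ _ (hg_radius _ _ _ (by norm_num)) hz
  have SK : HasSum (fun n => hgc (a+1+1) ((5/4-a)+1) ((3/2)+1) n * z ^ n)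
      (₂F₁ (a+1+1) ((5/4-a)+1) ((3/2)+1) z) :=
    hg_hasSum _ _ _ (hg_radius _ _ _ (by norm_num)) hz
  set μ : ℝ := (a+1) * (5/4 - a) / (3/2) with hμ
  set H : ℝ := ₂F₁ (a+1) (5/4 - a) (3/2) z with hH
  set K : ℝ := ₂F₁ (a+1+1) ((5/4-a)+1) ((3/2)+1) z with hK
  set h : ℕ → ℝ := fun n => hgc (a+1) (5/4-a) (3/2) n with hh
  set d : ℕ → ℝ := fun n => ((n:ℝ)+1) * h (n+1) with hd
  have SD : HasSum (fun n => d n * z ^ n) (μ * K) := by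
    have h1 := SK.mul_left μ
    have heq : (fun n => μ * (hgc (a+1+1) ((5/4-a)+1) ((3/2)+1) n * z ^ n))
        = fun n => d n * z ^ n := by
      funext n
      simp only [hd, hh, hμ]
      linear_combination (-(z^n : ℝ)) * hgc_step (a+1) (5/4-a) (3/2) n
    rwa [heq] at h1
  -- shifted series
  set f1 : ℕ → ℝ := fun n => match n with | 0 => 0 | (m+1) => h m * z^(m+1) with hf1
  set f2 : ℕ → ℝ := fun n => match n with | 0 => 0 | (m+1) => d m * z^(m+1) with hf2
  set f3 : ℕ → ℝ := fun n => match n with | 0 => 0 | 1 => 0 | (m+2) => d m * z^(m+2) with hf3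
  have hf1s : ∀ m : ℕ, f1 (m+1) = h m * z^(m+1) := fun m => rfl
  have hf2s : ∀ m : ℕ, f2 (m+1) = d m * z^(m+1) := fun m => rfl
  have hf3s : ∀ m : ℕ, f3 (m+2) = d m * z^(m+2) := fun m => rfl
  have S1 : HasSum f1 (H * z) := by
    have h1 : HasSum (fun n => f1 (n+1)) (H * z) := by
      have h2 := SH.mul_right z
      have heq : (fun n => h n * z ^ n * z) = fun n => f1 (n+1) := by
        funext n; rw [hf1s n]; ring
      rwa [heq] at h2
    have := (hasSum_nat_add_iff (f := f1) 1).mp h1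
    simpa [show f1 0 = (0:ℝ) from rfl] using this
  have S2 : HasSum f2 (μ * K * z) := by
    have h1 : HasSum (fun n => f2 (n+1)) (μ * K * z) := by
      have h2 := SD.mul_right z
      have heq : (fun n => d n * z ^ n * z) = fun n => f2 (n+1) := by
        funext n; rw [hf2s n]; ring
      rwa [heq] at h2
    have := (hasSum_nat_add_iff (f := f2) 1).mp h1
    simpa [show f2 0 = (0:ℝ) from rfl] using this
  have S3 : HasSum f3 (μ * K * z^2) := by
    have h1 : HasSum (fun n => f3 (n+2)) (μ * K * z^2) := by
      have h2 := SD.mul_right (z^2)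
      have heq : (fun n => d n * z ^ n * z^2) = fun n => f3 (n+2) := by
        funext n; rw [hf3s n]; ring
      rwa [heq] at h2
    have := (hasSum_nat_add_iff (f := f3) 2).mp h1
    simpa [Finset.sum_range_succ, show f3 0 = (0:ℝ) from rfl, show f3 1 = (0:ℝ) from rfl]
      using this
  -- total
  have Stot : HasSum (fun n => (h n * z ^ n - 5/2 * f1 n) + (2 * f2 n - 2 * f3 n))
      ((H - 5/2 * (H * z)) + (2 * (μ * K * z) - 2 * (μ * K * z^2))) :=
    (SH.sub (S1.mul_left (5/2))).add ((S2.mul_left 2).sub (S3.mul_left 2))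
  have heqG : (fun n => hgc a (1/4-a) (1/2) n * z ^ n)
      = fun n => (h n * z ^ n - 5/2 * f1 n) + (2 * f2 n - 2 * f3 n) := by
    funext n
    match n with
    | 0 =>
      show hgc a (1/4-a) (1/2) 0 * z ^ 0 = (h 0 * z ^ 0 - 5/2 * f1 0) + (2 * f2 0 - 2 * f3 0)
      have e0 : f1 0 = 0 := rfl
      have e1 : f2 0 = 0 := rfl
      have e2 : f3 0 = 0 := rfl
      rw [e0, e1, e2, hgc_zero]
      show (1:ℝ) * z ^ 0 = hgc (a+1) (5/4-a) (3/2) 0 * z ^ 0 - 5/2 * 0 + (2*0 - 2*0)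
      rw [hgc_zero]; ring
    | 1 =>
      have e0 : f1 1 = h 0 * z^1 := hf1s 0
      have e1 : f2 1 = d 0 * z^1 := hf2s 0
      have e2 : f3 1 = 0 := rfl
      rw [e0, e1, e2, hd]
      simp only [hh]
      have key := hgc_key a 0
      rw [show (0:ℕ)+1 = 1 from rfl] at key
      push_cast at key ⊢
      linear_combination (z : ℝ) * key
    | (m+2) =>
      have e0 : f1 (m+2) = h (m+1) * z^(m+2) := hf1s (m+1)
      have e1 : f2 (m+2) = d (m+1) * z^(m+2) := hf2s (m+1)
      have e2 : f3 (m+2) = d m * z^(m+2) := hf3s m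
      rw [e0, e1, e2, hd]
      simp only [hh]
      have key := hgc_key a (m+1)
      rw [show m+1+1 = m+2 from rfl] at key
      push_cast at key ⊢
      linear_combination (z^(m+2) : ℝ) * key
  rw [heqG] at SG
  have huniq := SG.unique Stot
  rw [huniq]
  ring

lemma E_deriv (z : ℝ) (hz0 : 0 < z) (hz1 : z < 1) :
    HasDerivAt (fun t => ∫ θ in (0:ℝ)..(Real.arcsin (Real.sqrt (1 - Real.sqrt (1 - t)))),
        1 / Real.sqrt (1 - (1/Real.sqrt 2)^2 * Real.sin θ^2))
      (Real.sqrt 2 / (4 * (z ^ ((1:ℝ)/2)) * ((1-z) ^ ((3:ℝ)/4)))) z := by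
  have h2 : ((1:ℝ)/Real.sqrt 2)^2 = 1/2 := by
    rw [div_pow, one_pow, Real.sq_sqrt (by norm_num : (0:ℝ) ≤ 2)]
  -- continuity of the integrand
  have hpos : ∀ θ : ℝ, (0:ℝ) < 1 - (1/Real.sqrt 2)^2 * Real.sin θ^2 := by
    intro θ
    rw [h2]
    nlinarith [Real.sin_sq_le_one θ]
  have hcont : Continuous fun θ : ℝ => 1 / Real.sqrt (1 - (1/Real.sqrt 2)^2 * Real.sin θ^2) := by
    apply Continuous.div continuous_const
    · exact Real.continuous_sqrt.comp (by continuity)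
    · intro θ
      exact ne_of_gt (Real.sqrt_pos.2 (hpos θ))
  -- basic quantities
  have h1z : (0:ℝ) < 1 - z := by linarith
  set w : ℝ := Real.sqrt (1 - z) with hw
  have hw0 : 0 < w := Real.sqrt_pos.2 h1z
  have hww : w^2 = 1 - z := Real.sq_sqrt h1z.le
  have hw1 : w < 1 := by
    rw [hw]
    rw [Real.sqrt_lt' one_pos]
    linarith
  have h1w : (0:ℝ) < 1 - w := by linarith
  set v : ℝ := Real.sqrt (1 - w) with hv
  have hv0 : 0 < v := Real.sqrt_pos.2 h1w
  have hvv : v^2 = 1 - w := Real.sq_sqrt h1w.le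
  have hv1 : v < 1 := by
    rw [hv, Real.sqrt_lt' one_pos]
    linarith
  -- derivative of ψ
  have d1 : HasDerivAt (fun t : ℝ => 1 - t) (-1) z := by
    simpa using (hasDerivAt_id z).const_sub 1
  have d2 : HasDerivAt (fun t : ℝ => Real.sqrt (1 - t)) (1/(2*w) * (-1)) z := by
    have := (Real.hasDerivAt_sqrt (ne_of_gt h1z)).comp z d1
    simpa [hw, Function.comp_def] using this
  have d3 : HasDerivAt (fun t : ℝ => 1 - Real.sqrt (1 - t)) (-(1/(2*w) * (-1))) z :=
    d2.const_sub 1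
  have d4 : HasDerivAt (fun t : ℝ => Real.sqrt (1 - Real.sqrt (1 - t)))
      (1/(2*v) * (-(1/(2*w) * (-1)))) z := by
    have := (Real.hasDerivAt_sqrt (ne_of_gt h1w)).comp z d3
    simpa [hv, hw, Function.comp_def] using this
  have d5 : HasDerivAt (fun t : ℝ => Real.arcsin (Real.sqrt (1 - Real.sqrt (1 - t))))
      (1 / Real.sqrt (1 - v^2) * (1/(2*v) * (-(1/(2*w) * (-1))))) z := by
    have harc := Real.hasDerivAt_arcsin (by linarith : v ≠ -1) (ne_of_lt hv1)
    have := harc.comp z d4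
    simpa [hv, hw, Function.comp_def] using this
  -- derivative of the integral
  set ψz : ℝ := Real.arcsin v with hψz
  have dF : HasDerivAt (fun φ => ∫ θ in (0:ℝ)..φ,
      1 / Real.sqrt (1 - (1/Real.sqrt 2)^2 * Real.sin θ^2))
      (1 / Real.sqrt (1 - (1/Real.sqrt 2)^2 * Real.sin ψz^2)) ψz :=
    (hcont.integral_hasStrictDerivAt 0 ψz).hasDerivAt
  have dE := dF.comp z d5
  -- simplify the value
  have hsin : Real.sin ψz = v := Real.sin_arcsin (by linarith) hv1.le
  rw [hsin] at dE
  have hval : (1 / Real.sqrt (1 - (1/Real.sqrt 2)^2 * v^2))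
      * (1 / Real.sqrt (1 - v^2) * (1/(2*v) * (-(1/(2*w) * (-1)))))
      = Real.sqrt 2 / (4 * (z ^ ((1:ℝ)/2)) * ((1-z) ^ ((3:ℝ)/4))) := by
    rw [h2]
    have e1 : (1:ℝ) - 1/2 * v^2 = (1+w)/2 := by rw [hvv]; ring
    have e2 : (1:ℝ) - v^2 = w := by rw [hvv]; ring
    rw [e1, e2]
    have e3 : Real.sqrt ((1+w)/2) = Real.sqrt (1+w) / Real.sqrt 2 := by
      rw [show (1+w)/2 = (1+w) * (2:ℝ)⁻¹ from by ring, Real.sqrt_mul (by linarith),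
        Real.sqrt_inv, div_eq_mul_inv]
    have hx1 : z ^ ((1:ℝ)/2) = Real.sqrt z := (Real.sqrt_eq_rpow z).symm
    have hq : (1-z) ^ ((1:ℝ)/4) = Real.sqrt w := by
      have h' : (1-z) ^ ((1:ℝ)/4) = ((1-z)^((1:ℝ)/2))^((1:ℝ)/2) := by
        rw [← Real.rpow_mul h1z.le]
        norm_num
      rw [h', hw, Real.sqrt_eq_rpow, Real.sqrt_eq_rpow]
    have hx2 : (1-z) ^ ((3:ℝ)/4) = w * Real.sqrt w := by
      have h' : (1-z) ^ ((3:ℝ)/4) = (1-z)^((1:ℝ)/2) * (1-z)^((1:ℝ)/4) := by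
        rw [← Real.rpow_add h1z]; norm_num
      rw [h', hq, ← Real.sqrt_eq_rpow, ← hw]
    have key : v * Real.sqrt (1+w) = Real.sqrt z := by
      rw [hv, ← Real.sqrt_mul (by linarith : (0:ℝ) ≤ 1 - w)]
      congr 1
      linear_combination -hww
    rw [e3, hx1, hx2, ← key]
    have n1 : Real.sqrt (1+w) ≠ 0 := ne_of_gt (Real.sqrt_pos.2 (by linarith))
    have n2 : Real.sqrt 2 ≠ 0 := ne_of_gt (Real.sqrt_pos.2 (by norm_num))
    have n3 : Real.sqrt w ≠ 0 := ne_of_gt (Real.sqrt_pos.2 hw0)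
    have n4 : v ≠ 0 := ne_of_gt hv0
    have n5 : w ≠ 0 := ne_of_gt hw0
    field_simp
    ring
  rw [hval] at dE
  exact dE

/-- New indefinite integral of a product of a hypergeometric function with an incomplete
elliptic integral of the first kind `F(φ,k) = ∫₀^φ dθ/√(1-k²sin²θ)`: for real `a` with
`a ≠ 0`, `a ≠ 1/4`, and `ψ(z) = arcsin √(1-√(1-z))`, for every `z ∈ (0,1)` the function
`z ↦ (√2/(a(4a-1))) ₂F₁(a,1/4-a;1/2;z)
  + 2 z^(1/2) (1-z)^(3/4) F(ψ(z),1/√2) ₂F₁(a+1,5/4-a;3/2;z)`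
has derivative `z^(-1/2) (1-z)^(-1/4) F(ψ(z),1/√2) ₂F₁(a,1/4-a;1/2;z)` at `z`. -/
theorem hypergeometric_elliptic_integral
    (a : ℝ) (ha0 : a ≠ 0) (ha4 : a ≠ 1 / 4)
    (F : ℝ → ℝ → ℝ) (ψ : ℝ → ℝ)
    (hF : ∀ φ k : ℝ, F φ k = ∫ θ in (0 : ℝ)..φ, 1 / Real.sqrt (1 - k ^ 2 * Real.sin θ ^ 2))
    (hψ : ∀ z : ℝ, ψ z = Real.arcsin (Real.sqrt (1 - Real.sqrt (1 - z)))) :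
    ∀ z ∈ Set.Ioo (0 : ℝ) 1,
      HasDerivAt
        (fun t => Real.sqrt 2 / (a * (4 * a - 1)) * ₂F₁ a (1 / 4 - a) (1 / 2) t
          + 2 * t ^ ((1 : ℝ) / 2) * (1 - t) ^ ((3 : ℝ) / 4)
            * F (ψ t) (1 / Real.sqrt 2) * ₂F₁ (a + 1) (5 / 4 - a) (3 / 2) t)
        (z ^ (-(1 : ℝ) / 2) * (1 - z) ^ (-(1 : ℝ) / 4)
          * F (ψ z) (1 / Real.sqrt 2) * ₂F₁ a (1 / 4 - a) (1 / 2) z) z := by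
  intro z hz
  obtain ⟨hz0, hz1⟩ := hz
  have h1z : (0:ℝ) < 1 - z := by linarith
  have habs : |z| < 1 := abs_lt.2 ⟨by linarith, hz1⟩
  simp only [hF, hψ]
  -- derivative pieces
  have ebc : (1/4 - a) + 1 = 5/4 - a := by ring
  have ec2 : (1/2 : ℝ) + 1 = 3/2 := by norm_num
  have dG := hg_hasDerivAt a (1/4-a) (1/2)
    (hg_radius _ _ _ (by norm_num)) (by rw [ebc, ec2]; exact hg_radius _ _ _ (by norm_num)) habs
  rw [ebc, ec2] at dG
  have dH := hg_hasDerivAt (a+1) (5/4-a) (3/2)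
    (hg_radius _ _ _ (by norm_num)) (hg_radius _ _ _ (by norm_num)) habs
  have dS1 : HasDerivAt (fun t : ℝ => t ^ ((1:ℝ)/2)) ((1:ℝ)/2 * z ^ ((1:ℝ)/2 - 1)) z :=
    Real.hasDerivAt_rpow_const (Or.inl (ne_of_gt hz0))
  have d1 : HasDerivAt (fun t : ℝ => 1 - t) (-1) z := by
    simpa using (hasDerivAt_id z).const_sub 1
  have dS2 : HasDerivAt (fun t : ℝ => (1 - t) ^ ((3:ℝ)/4))
      (((3:ℝ)/4 * (1-z) ^ ((3:ℝ)/4 - 1)) * (-1)) z := by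
    exact (Real.hasDerivAt_rpow_const (p := (3:ℝ)/4) (Or.inl (ne_of_gt h1z))).comp z d1
  have dE := E_deriv z hz0 hz1
  have hbig := (((dS1.const_mul 2).mul dS2).mul dE).mul dH
  have htot := (dG.const_mul (Real.sqrt 2 / (a * (4 * a - 1)))).add hbig
  convert htot using 1
  case e'_4 => rfl
  case e'_5 => rfl
  case e'_8 => rfl
  simp only [Pi.mul_apply]
  -- now the value identity
  set G := ₂F₁ a (1/4 - a) (1/2) z with hG
  set H := ₂F₁ (a+1) (5/4 - a) (3/2) z with hH
  set K := ₂F₁ (a+1+1) ((5/4-a)+1) ((3/2)+1) z with hK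
  set Ez := ∫ θ in (0:ℝ)..(Real.arcsin (Real.sqrt (1 - Real.sqrt (1 - z)))),
      1 / Real.sqrt (1 - (1/Real.sqrt 2)^2 * Real.sin θ^2) with hEz
  have hcont := hg_contiguous a habs
  rw [← hG, ← hH, ← hK] at hcont
  set X := z ^ ((1:ℝ)/2) with hXdef
  set Y := (1-z) ^ ((1:ℝ)/4) with hYdef
  have hX0 : 0 < X := Real.rpow_pos_of_pos hz0 _
  have hY0 : 0 < Y := Real.rpow_pos_of_pos h1z _
  have hXz : X ^ 2 = z := by
    rw [hXdef, ← Real.rpow_natCast (z ^ ((1:ℝ)/2)) 2, ← Real.rpow_mul hz0.le]; norm_num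
  have hY4 : Y ^ 4 = 1 - z := by
    rw [hYdef, ← Real.rpow_natCast ((1-z) ^ ((1:ℝ)/4)) 4, ← Real.rpow_mul h1z.le]; norm_num
  have h34 : (1-z) ^ ((3:ℝ)/4) = Y ^ 3 := by
    rw [hYdef, ← Real.rpow_natCast ((1-z) ^ ((1:ℝ)/4)) 3, ← Real.rpow_mul h1z.le]; norm_num
  have hmz : z ^ (-(1:ℝ)/2) = X⁻¹ := by
    rw [show (-(1:ℝ)/2) = -((1:ℝ)/2) by norm_num, Real.rpow_neg hz0.le, hXdef]
  have hmy : (1-z) ^ (-(1:ℝ)/4) = Y⁻¹ := by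
    rw [show (-(1:ℝ)/4) = -((1:ℝ)/4) by norm_num, Real.rpow_neg h1z.le, hYdef]
  have he1 : ((1:ℝ)/2 - 1) = -((1:ℝ)/2) := by norm_num
  have he2 : ((3:ℝ)/4 - 1) = -((1:ℝ)/4) := by norm_num
  rw [he1, he2, Real.rpow_neg hz0.le, Real.rpow_neg h1z.le, ← hXdef, ← hYdef, h34, hmz, hmy]
  rw [← hY4, ← hXz] at hcont
  have hrel : X^2 + Y^4 = 1 := by rw [hXz, hY4]; ring
  have hcont2 : G = (Y^4 - 3/2 * X^2) * H
      + 2*X^2*Y^4*((a+1)*(5/4-a)/(3/2)*K) := by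
    rw [hcont]; linear_combination (-H) * hrel
  rw [hcont2]
  have ha1 : (4*a - 1) ≠ 0 := by
    intro h; apply ha4; linarith
  have hs2 : Real.sqrt 2 ≠ 0 := ne_of_gt (Real.sqrt_pos.2 (by norm_num))
  field_simp
  have hinv : (-1 + a*4) * (-1 + a*4)⁻¹ = 1 := mul_inv_cancel₀ (by intro h; apply ha1; linarith)
  linear_combination (Y*X*H*Real.sqrt 2*12) * hinv
end

section
/- Fix real parameters a > 1, q, α, β, γ, δ with ε = α+β+1−γ−δ, set Q(x) = (αβx−q)/(x(x−1)(x−a)) and K(x) = (α+β+1)x² − [a(γ+δ) + α+β+1 − δ]x + aγ. Let I ⊆ (a,∞) be an open interval, let y : ℝ → ℝ be twice differentiable on I solving the Heun equation y''(x) + (γ/x + δ/(x−1) + ε/(x−a))y'(x) + Q(x)y(x) = 0 on I, and let h : ℝ → ℝ be twice differentiable on I with h''(x) + Q(x)h(x) = 0 on I. Then for every x ∈ I the function x ↦ x^γ(x−1)^δ(x−a)^ε (h'(x)y(x) − h(x)y'(x)) has derivative at x equal to x^(γ−1)(x−1)^(δ−1)(x−a)^(ε−1) K(x) h'(x) y(x).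 (Equivalently, ∫ x^(γ−1)(x−1)^(δ−1)(x−a)^(ε−1) K(x)h'(x)y(x)dx = x^γ(x−1)^δ(x−a)^ε [h'(x)y(x) − h(x)y'(x)] + c.) -/
open Real

/-- Lagrangian identity for the Heun equation with auxiliary function `h` solving
`h'' + Q h = 0`: with `ε = α+β+1-γ-δ`, `Q x = (αβx-q)/(x(x-1)(x-a))` and
`K(x) = (α+β+1)x² - [a(γ+δ)+α+β+1-δ]x + aγ` (so that `P x = K x/(x(x-1)(x-a))`),
for any solution `y` of the Heun equation on an open interval `I ⊆ (a,∞)` (`a > 1`),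
the function `x ↦ x^γ (x-1)^δ (x-a)^ε (h'(x)y(x) - h(x)y'(x))` has derivative
`x^(γ-1) (x-1)^(δ-1) (x-a)^(ε-1) K(x) h'(x) y(x)` at every point of `I`. -/
theorem heun_integral_h_no_first_derivative
    (a q α β γ δ ε : ℝ) (ha : 1 < a) (hε : ε = α + β + 1 - γ - δ)
    (K : ℝ → ℝ)
    (hK : ∀ x, K x = (α + β + 1) * x ^ 2 - (a * (γ + δ) + α + β + 1 - δ) * x + a * γ)
    (I : Set ℝ) (hI : IsOpen I) (hIconn : I.OrdConnected) (hIsub : I ⊆ Set.Ioi a)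
    (y y' y'' h h' h'' : ℝ → ℝ)
    (hy : ∀ x ∈ I, HasDerivAt y (y' x) x)
    (hy' : ∀ x ∈ I, HasDerivAt y' (y'' x) x)
    (hodey : ∀ x ∈ I, y'' x + (γ / x + δ / (x - 1) + ε / (x - a)) * y' x
      + ((α * β * x - q) / (x * (x - 1) * (x - a))) * y x = 0)
    (hh : ∀ x ∈ I, HasDerivAt h (h' x) x)
    (hh' : ∀ x ∈ I, HasDerivAt h' (h'' x) x)
    (hodeh : ∀ x ∈ I, h'' x + ((α * β * x - q) / (x * (x - 1) * (x - a))) * h x = 0) :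
    ∀ x ∈ I, HasDerivAt
      (fun t => t ^ γ * (t - 1) ^ δ * (t - a) ^ ε * (h' t * y t - h t * y' t))
      (x ^ (γ - 1) * (x - 1) ^ (δ - 1) * (x - a) ^ (ε - 1) * K x * h' x * y x) x := by
  intro x hx
  have hxa : a < x := hIsub hx
  have hx0 : (0:ℝ) < x := lt_trans (lt_trans one_pos ha) hxa
  have hx1 : (0:ℝ) < x - 1 := by linarith
  have hxa' : (0:ℝ) < x - a := by linarith
  have h1 : HasDerivAt (fun t : ℝ => t ^ γ) (γ * x ^ (γ - 1)) x :=
    Real.hasDerivAt_rpow_const (Or.inl hx0.ne')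
  have h2 : HasDerivAt (fun t : ℝ => (t - 1) ^ δ) (1 * δ * (x - 1) ^ (δ - 1)) x :=
    ((hasDerivAt_id x).sub_const 1).rpow_const (Or.inl hx1.ne')
  have h3 : HasDerivAt (fun t : ℝ => (t - a) ^ ε) (1 * ε * (x - a) ^ (ε - 1)) x :=
    ((hasDerivAt_id x).sub_const a).rpow_const (Or.inl hxa'.ne')
  have hW : HasDerivAt (fun t => h' t * y t - h t * y' t)
      (h'' x * y x - h x * y'' x) x := by
    have := ((hh' x hx).mul (hy x hx)).sub ((hh x hx).mul (hy' x hx))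
    convert this using 1; rfl; rfl; rfl; ring
  have hprod := (((h1.mul h2).mul h3).mul hW)
  convert hprod using 1
  rfl
  rfl
  rfl
  simp only [Pi.mul_apply]
  have ey : y'' x = -((γ / x + δ / (x - 1) + ε / (x - a)) * y' x)
      - ((α * β * x - q) / (x * (x - 1) * (x - a))) * y x := by
    have := hodey x hx; linarith
  have eh : h'' x = -(((α * β * x - q) / (x * (x - 1) * (x - a))) * h x) := by
    have := hodeh x hx; linarith
  have rg : x ^ γ = x ^ (γ - 1) * x := by
    rw [← Real.rpow_add_one hx0.ne']; ring_nf
  have rd : (x - 1) ^ δ = (x - 1) ^ (δ - 1) * (x - 1) := by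
    rw [← Real.rpow_add_one hx1.ne']; ring_nf
  have re : (x - a) ^ ε = (x - a) ^ (ε - 1) * (x - a) := by
    rw [← Real.rpow_add_one hxa'.ne']; ring_nf
  rw [ey, eh, hK x, rg, rd, re, hε]
  field_simp
  ring
end
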